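/- arXiv:2207.12634 — 4 statements merged into one kernel-verified Lean document; each statement's English description precedes it below -/
import Mathlib

section
/- Let 1<p<∞. If the composition operator C_φ induced by an analytic self-map φ of the unit disk is an isometry on the analytic Besov space B_p (with norm ‖f‖_{B_p} = |f(0)| + ‖f‖_p), then φ(0)=0 and ‖f∘φ‖_p = ‖f‖_p for every f ∈ B_p. -/
open MeasureTheory

/-- The open unit disk in the complex plane. -/
noncomputable def unitDisk : Set ℂ := Metric.ball (0 : ℂ) 1

/-- Lebesgue area measure on ℂ normalized so that the unit disk has measure 1,
i.e., (1/π) times two-dimensional Lebesgue measure. -/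
noncomputable def dA : Measure ℂ := (ENNReal.ofReal Real.pi)⁻¹ • (volume : Measure ℂ)

/-- φ is an analytic self-map of the unit disk. -/
def IsAnalyticSelfMap (φ : ℂ → ℂ) : Prop :=
  DifferentiableOn ℂ φ unitDisk ∧ Set.MapsTo φ unitDisk unitDisk

/-- The Besov integrand ‖f'(z)‖^p (1-|z|²)^{p-2}. -/
noncomputable def besovIntegrand (p : ℝ) (f : ℂ → ℂ) (z : ℂ) : ℝ :=
  ‖deriv f z‖ ^ p * (1 - ‖z‖ ^ 2) ^ (p - 2)

/-- Membership in the analytic Besov space B_p: f is analytic on 𝔻 and the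
Besov integral is finite (expressed as integrability of the nonnegative integrand). -/
def MemBesov (p : ℝ) (f : ℂ → ℂ) : Prop :=
  DifferentiableOn ℂ f unitDisk ∧ IntegrableOn (besovIntegrand p f) unitDisk dA

/-- The Besov semi-norm ‖f‖_p = (∫_𝔻 |f'|^p (1-|z|²)^{p-2} dA)^{1/p}. -/
noncomputable def besovSemi (p : ℝ) (f : ℂ → ℂ) : ℝ :=
  (∫ z in unitDisk, besovIntegrand p f z ∂dA) ^ (1 / p)

/-- The Besov norm ‖f‖_{B_p} = |f(0)| + ‖f‖_p. -/
noncomputable def besovNorm (p : ℝ) (f : ℂ → ℂ) : ℝ := ‖f 0‖ + besovSemi p f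

/-- The composition operator C_φ is an isometry on B_p. -/
def IsBesovIsometry (p : ℝ) (φ : ℂ → ℂ) : Prop :=
  ∀ f : ℂ → ℂ, MemBesov p f → MemBesov p (f ∘ φ) ∧ besovNorm p (f ∘ φ) = besovNorm p f

/-- φ is a rotation of the disk: φ(z) = λ z for a unimodular constant λ. -/
def IsRotation (φ : ℂ → ℂ) : Prop :=
  ∃ lam : ℂ, ‖lam‖ = 1 ∧ ∀ z ∈ unitDisk, φ z = lam * z


open Metric Set
open scoped ENNReal NNReal

lemma weight_integrable {p : ℝ} (hp : 1 < p) :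
    IntegrableOn (fun z : ℂ => (1 - ‖z‖ ^ 2) ^ (p - 2)) unitDisk dA := by
  set q := p - 2 with hq_def
  have hq : -1 < q := by rw [hq_def]; linarith
  have hw_meas : Measurable fun z : ℂ => (1 - ‖z‖ ^ 2) ^ q := by fun_prop
  have h_nn : ∀ z ∈ Metric.ball (0:ℂ) 1, 0 ≤ (1 - ‖z‖ ^ 2) ^ q := by
    intro z hz
    have hz1 : ‖z‖ < 1 := mem_ball_zero_iff.1 hz
    have : (0:ℝ) ≤ 1 - ‖z‖ ^ 2 := by nlinarith [norm_nonneg z]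
    exact Real.rpow_nonneg this _
  have h_ae_nn : 0 ≤ᵐ[volume.restrict (Metric.ball (0:ℂ) 1)]
      fun z : ℂ => (1 - ‖z‖ ^ 2) ^ q :=
    (ae_restrict_iff' measurableSet_ball).2 (ae_of_all _ h_nn)
  have hvol : IntegrableOn (fun z : ℂ => (1 - ‖z‖ ^ 2) ^ q) (Metric.ball (0:ℂ) 1) volume := by
    refine ⟨hw_meas.aestronglyMeasurable, ?_⟩
    rw [hasFiniteIntegral_iff_ofReal h_ae_nn]
    rw [lintegral_eq_lintegral_meas_le _ h_ae_nn hw_meas.aemeasurable]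
    set ν := volume.restrict (Metric.ball (0:ℂ) 1) with hν
    set S : ℝ → Set ℂ := fun t => {a : ℂ | t ≤ (1 - ‖a‖ ^ 2) ^ q} with hS
    calc ∫⁻ t in Ioi (0:ℝ), ν (S t)
        ≤ ∫⁻ t in Ioc (0:ℝ) 1 ∪ Ioi 1, ν (S t) := lintegral_mono_set Ioi_subset_Ioc_union_Ioi
      _ ≤ (∫⁻ t in Ioc (0:ℝ) 1, ν (S t)) + ∫⁻ t in Ioi (1:ℝ), ν (S t) := lintegral_union_le _ _ _
      _ < ∞ := ENNReal.add_lt_top.2 ⟨?_, ?_⟩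
    · refine lt_of_le_of_lt (setLIntegral_mono' (g := fun _ => volume (Metric.ball (0:ℂ) 1))
        measurableSet_Ioc fun t _ => ?_) ?_
      · exact (measure_mono (subset_univ _)).trans_eq (Measure.restrict_apply_univ _)
      · rw [setLIntegral_const]
        exact ENNReal.mul_lt_top measure_ball_lt_top (by simp)
    · rcases le_or_gt 0 q with hq0 | hq0
      · have hz : ∀ t ∈ Ioi (1:ℝ), ν (S t) = 0 := by
          intro t ht
          have hempty : S t ∩ Metric.ball (0:ℂ) 1 = ∅ := by
            ext z
            simp only [hS, mem_inter_iff, mem_setOf_eq, mem_empty_iff_false, iff_false, not_and]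
            intro hle hzB
            have hz1 : ‖z‖ < 1 := mem_ball_zero_iff.1 hzB
            have h1 : (1 - ‖z‖ ^ 2) ^ q ≤ 1 :=
              Real.rpow_le_one (by nlinarith [norm_nonneg z]) (by nlinarith [norm_nonneg z]) hq0
            linarith [mem_Ioi.1 ht]
          rw [hν, Measure.restrict_apply' measurableSet_ball, hempty, measure_empty]
        rw [setLIntegral_congr_fun measurableSet_Ioi hz]
        simp
      · have hqi : q⁻¹ < -1 := by
          rw [← one_div, div_lt_iff_of_neg hq0]; linarith
        refine lt_of_le_of_lt (setLIntegral_mono'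
          (g := fun t => ENNReal.ofReal (Real.pi * t ^ q⁻¹)) measurableSet_Ioi fun t ht => ?_) ?_
        · -- ν (S t) ≤ ofReal (π * t ^ q⁻¹)
          have ht1 : (1:ℝ) < t := mem_Ioi.1 ht
          have ht0 : (0:ℝ) < t := lt_trans one_pos ht1
          set s := t ^ q⁻¹ with hs_def
          have hs0 : 0 < s := Real.rpow_pos_of_pos ht0 _
          have hs1 : s < 1 := Real.rpow_lt_one_of_one_lt_of_neg ht1 (by linarith)
          have hsub : S t ∩ Metric.ball (0:ℂ) 1 ⊆
              Metric.ball (0:ℂ) 1 \ Metric.ball (0:ℂ) (Real.sqrt (1 - s)) := by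
            rintro z ⟨hzS, hzB⟩
            refine ⟨hzB, ?_⟩
            have hz1 : ‖z‖ < 1 := mem_ball_zero_iff.1 hzB
            have hx0 : (0:ℝ) < 1 - ‖z‖ ^ 2 := by nlinarith [norm_nonneg z]
            have hle : t ≤ (1 - ‖z‖ ^ 2) ^ q := hzS
            have : ((1 - ‖z‖ ^ 2) ^ q) ^ q⁻¹ ≤ t ^ q⁻¹ :=
              Real.rpow_le_rpow_of_nonpos ht0 hle (by linarith)
            rw [Real.rpow_rpow_inv hx0.le hq0.ne] at this
            -- 1 - ‖z‖^2 ≤ s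
            have hznorm : Real.sqrt (1 - s) ≤ ‖z‖ := by
              have h2 : 1 - s ≤ ‖z‖ ^ 2 := by linarith
              calc Real.sqrt (1 - s) ≤ Real.sqrt (‖z‖ ^ 2) := Real.sqrt_le_sqrt h2
                _ = ‖z‖ := by rw [Real.sqrt_sq (norm_nonneg z)]
            simp only [mem_ball_zero_iff, not_lt]
            exact hznorm
          have hmeas : ν (S t) ≤ volume (Metric.ball (0:ℂ) 1 \ Metric.ball (0:ℂ) (Real.sqrt (1 - s))) := by
            rw [hν, Measure.restrict_apply' measurableSet_ball]
            exact measure_mono hsub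
          refine hmeas.trans ?_
          have hdiff : volume (Metric.ball (0:ℂ) 1 \ Metric.ball (0:ℂ) (Real.sqrt (1 - s)))
              = volume (Metric.ball (0:ℂ) 1) - volume (Metric.ball (0:ℂ) (Real.sqrt (1 - s))) :=
            measure_diff (ball_subset_ball (by
              have h' : Real.sqrt (1 - s) ≤ Real.sqrt 1 := Real.sqrt_le_sqrt (by linarith)
              simpa using h'))
              measurableSet_ball.nullMeasurableSet measure_ball_lt_top.ne
          rw [hdiff, Complex.volume_ball, Complex.volume_ball]
          have hpi : (NNReal.pi : ℝ≥0∞) = ENNReal.ofReal Real.pi := by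
            rw [← NNReal.coe_real_pi, ENNReal.ofReal_coe_nnreal]
          have h1s : (0:ℝ) ≤ 1 - s := by linarith
          rw [hpi, ← ENNReal.ofReal_pow (Real.sqrt_nonneg _), Real.sq_sqrt h1s]
          rw [show ((ENNReal.ofReal 1) ^ 2 : ℝ≥0∞) = 1 by simp, one_mul]
          rw [← ENNReal.ofReal_mul h1s]
          rw [← ENNReal.ofReal_sub _ (by positivity)]
          apply ENNReal.ofReal_le_ofReal
          nlinarith [Real.pi_pos]
        · have hInt : IntegrableOn (fun t : ℝ => Real.pi * t ^ q⁻¹) (Ioi (1:ℝ)) volume :=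
            (integrableOn_Ioi_rpow_of_lt hqi one_pos).const_mul _
          exact hInt.setLIntegral_lt_top
  have hd : dA = (ENNReal.ofReal Real.pi)⁻¹ • (volume : Measure ℂ) := rfl
  rw [IntegrableOn, unitDisk, hd, Measure.restrict_smul]
  exact (hvol.smul_measure (by
    simp only [ne_eq, ENNReal.inv_eq_top]
    exact (ENNReal.ofReal_pos.2 Real.pi_pos).ne'))


lemma besovIntegrand_add_const (p : ℝ) (f : ℂ → ℂ) (c : ℂ) :
    besovIntegrand p (fun z => f z + c) = besovIntegrand p f := by
  funext z
  simp only [besovIntegrand, deriv_add_const]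

lemma memBesov_add_const {p : ℝ} {f : ℂ → ℂ} (hf : MemBesov p f) (c : ℂ) :
    MemBesov p (fun z => f z + c) := by
  refine ⟨fun z hz => (hf.1 z hz).add_const c, ?_⟩
  rw [besovIntegrand_add_const]
  exact hf.2

lemma besovSemi_add_const (p : ℝ) (f : ℂ → ℂ) (c : ℂ) :
    besovSemi p (fun z => f z + c) = besovSemi p f := by
  simp only [besovSemi, besovIntegrand_add_const]

lemma besov_key {p : ℝ} {φ : ℂ → ℂ} (hiso : IsBesovIsometry p φ)
    {f : ℂ → ℂ} (hf : MemBesov p f) :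
    f (φ 0) = f 0 ∧ besovSemi p (f ∘ φ) = besovSemi p f := by
  have hE : ∀ c : ℂ, ‖f (φ 0) + c‖ + besovSemi p (f ∘ φ)
      = ‖f 0 + c‖ + besovSemi p f := by
    intro c
    have h := (hiso (fun z => f z + c) (memBesov_add_const hf c)).2
    have hcomp : (fun z => f z + c) ∘ φ = fun z => (f ∘ φ) z + c := rfl
    rw [besovNorm, besovNorm, hcomp, besovSemi_add_const, besovSemi_add_const] at h
    simpa [Function.comp] using h
  set A := f (φ 0)
  set B := f 0
  set T := besovSemi p (f ∘ φ)
  set S := besovSemi p f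
  have h1 : ‖A - B‖ + T = S := by
    have := hE (-B)
    rwa [← sub_eq_add_neg, ← sub_eq_add_neg, sub_self, norm_zero, zero_add] at this
  have h2 : T = ‖B - A‖ + S := by
    have := hE (-A)
    rwa [← sub_eq_add_neg, ← sub_eq_add_neg, sub_self, norm_zero, zero_add] at this
  have hrev : ‖B - A‖ = ‖A - B‖ := norm_sub_rev B A
  have hAB : ‖A - B‖ = 0 := by linarith [norm_nonneg (A - B)]
  have hA : A = B := sub_eq_zero.1 (norm_eq_zero.1 hAB)
  refine ⟨hA, ?_⟩
  linarith

lemma memBesov_id {p : ℝ} (hp : 1 < p) : MemBesov p (fun z : ℂ => z) := by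
  refine ⟨differentiableOn_id, ?_⟩
  have : besovIntegrand p (fun z : ℂ => z) = fun z : ℂ => (1 - ‖z‖ ^ 2) ^ (p - 2) := by
    funext z
    simp [besovIntegrand, deriv_id'', Real.one_rpow]
  rw [this]
  exact weight_integrable hp

/-- If C_φ is an isometry on B_p (1<p<∞), then φ(0)=0 and
‖f∘φ‖_p = ‖f‖_p for every f ∈ B_p. -/
theorem isometry_fixes_origin_and_preserves_seminorm
    (p : ℝ) (hp : 1 < p) (φ : ℂ → ℂ)
    (hφ : IsAnalyticSelfMap φ) (hiso : IsBesovIsometry p φ) :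
    φ 0 = 0 ∧ ∀ f : ℂ → ℂ, MemBesov p f → besovSemi p (f ∘ φ) = besovSemi p f := by
  constructor
  · have h := (besov_key hiso (memBesov_id hp)).1
    simpa using h
  · intro f hf
    exact (besov_key hiso hf).2
end

section
/- Let 1<p<∞ with p≠2. If the composition operator C_φ induced by an analytic self-map φ of the unit disk is an isometry on the analytic Besov space B_p, then the weighted composition operator W_{φ',φ} is an isometry on the weighted Bergman space A^p_{p-2}; that is, for every f analytic on 𝔻 with ∫_𝔻 |f(z)|^p (1-|z|²)^{p-2} dA(z) < ∞, one has ∫_𝔻 |φ'(z)|^p |f(φ(z))|^p (1-|z|²)^{p-2} dA(z) = ∫_𝔻 |f(z)|^p (1-|z|²)^{p-2} dA(z). -/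
open MeasureTheory

private lemma taylor_hasSum' {f : ℂ → ℂ} (hf : DifferentiableOn ℂ f (Metric.ball 0 1))
    {z : ℂ} (hz : z ∈ Metric.ball (0:ℂ) 1) :
    HasSum (fun n => ((Nat.factorial n : ℂ)⁻¹ * iteratedDeriv n f 0) * z ^ n) (f z) := by
  have h := Complex.hasSum_taylorSeries_on_ball hf hz
  have h2 : (fun n => ((Nat.factorial n : ℂ)⁻¹ * iteratedDeriv n f 0) * z ^ n)
      = fun n => (Nat.factorial n : ℂ)⁻¹ • (z - 0) ^ n • iteratedDeriv n f 0 := by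
    funext n; simp [smul_eq_mul]; ring
  rw [h2]; exact h

private lemma exists_primitive' {f : ℂ → ℂ} (hf : DifferentiableOn ℂ f (Metric.ball 0 1)) :
    ∃ F : ℂ → ℂ, F 0 = 0 ∧ ∀ z ∈ Metric.ball (0:ℂ) 1, HasDerivAt F (f z) z := by
  set a : ℕ → ℂ := fun n => (Nat.factorial n : ℂ)⁻¹ * iteratedDeriv n f 0 with ha
  refine ⟨fun w => ∑' n, a n / ((n : ℂ) + 1) * w ^ (n + 1), by simp, ?_⟩
  intro z hz
  rw [mem_ball_zero_iff] at hz
  set r : ℝ := (‖z‖ + 1) / 2 with hr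
  have hnz := norm_nonneg z
  have hr0 : 0 < r := by positivity
  have hzr : ‖z‖ < r := by rw [hr]; linarith
  have hr1 : r < 1 := by rw [hr]; linarith
  have hrball : (r : ℂ) ∈ Metric.ball (0:ℂ) 1 := by
    rw [mem_ball_zero_iff, Complex.norm_real, Real.norm_eq_abs, abs_of_pos hr0]; exact hr1
  have hsum : Summable (fun n => a n * (r : ℂ) ^ n) := (taylor_hasSum' hf hrball).summable
  have hu : Summable (fun n => ‖a n * (r : ℂ) ^ n‖) := summable_norm_iff.mpr hsum
  have key := hasDerivAt_tsum_of_isPreconnected hu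
      (Metric.isOpen_ball (x := (0:ℂ)) (ε := r))
      ((convex_ball (0:ℂ) r).isPreconnected)
      (g := fun n w => a n / ((n:ℂ)+1) * w ^ (n+1)) (g' := fun n w => a n * w ^ n)
      ?_ ?_ (Metric.mem_ball_self hr0) ?_ (mem_ball_zero_iff.mpr hzr)
  · have ht : (∑' n, a n * z ^ n) = f z :=
      (taylor_hasSum' hf (mem_ball_zero_iff.mpr (hzr.trans hr1))).tsum_eq
    rwa [ht] at key
  · intro n y hy
    have hne : ((n:ℂ)+1) ≠ 0 := Nat.cast_add_one_ne_zero n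
    have h1 : HasDerivAt (fun w : ℂ => w ^ (n+1)) (((n:ℂ)+1) * y ^ n) y := by
      simpa using hasDerivAt_pow (n+1) y
    have h2 := h1.const_mul (a n / ((n:ℂ)+1))
    convert h2 using 1
    · rfl
    rw [div_mul_eq_mul_div, eq_div_iff hne]
    ring
  · intro n y hy
    rw [mem_ball_zero_iff] at hy
    have hyr : ‖y‖ ≤ r := hy.le
    calc ‖a n * y ^ n‖ = ‖a n‖ * ‖y‖ ^ n := by simp
      _ ≤ ‖a n‖ * r ^ n := by gcongr
      _ = ‖a n * (r:ℂ) ^ n‖ := by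
          simp [abs_of_pos hr0]
  · simpa [zero_pow] using summable_zero

/-- If C_φ is an isometry on B_p (1<p<∞, p≠2), then the weighted
composition operator W_{φ',φ} is an isometry on the weighted Bergman space
A^p_{p-2}. -/
theorem weighted_composition_isometry
    (p : ℝ) (hp1 : 1 < p) (hp2 : p ≠ 2) (φ : ℂ → ℂ)
    (hφ : IsAnalyticSelfMap φ) (hiso : IsBesovIsometry p φ) :
    ∀ f : ℂ → ℂ, DifferentiableOn ℂ f unitDisk →
      IntegrableOn (fun z => ‖f z‖ ^ p * (1 - ‖z‖ ^ 2) ^ (p - 2)) unitDisk dA →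
      ∫ z in unitDisk, ‖deriv φ z‖ ^ p * ‖f (φ z)‖ ^ p * (1 - ‖z‖ ^ 2) ^ (p - 2) ∂dA
        = ∫ z in unitDisk, ‖f z‖ ^ p * (1 - ‖z‖ ^ 2) ^ (p - 2) ∂dA := by
  intro f hf hint
  have hopen : IsOpen unitDisk := Metric.isOpen_ball
  have hmeas : MeasurableSet unitDisk := measurableSet_ball
  obtain ⟨F, hF0, hFd⟩ := exists_primitive' (f := f) hf
  have hFd' : ∀ z ∈ unitDisk, HasDerivAt F (f z) z := hFd
  have h0disk : (0:ℂ) ∈ unitDisk := by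
    simp [unitDisk]
  have hφ0 : φ 0 ∈ unitDisk := hφ.2 h0disk
  have derivF : ∀ z ∈ unitDisk, deriv F z = f z := fun z hz => (hFd' z hz).deriv
  have diffF : DifferentiableOn ℂ F unitDisk := fun z hz =>
    (hFd' z hz).differentiableAt.differentiableWithinAt
  have hFint : IntegrableOn (besovIntegrand p F) unitDisk dA := by
    refine hint.congr_fun (fun z hz => ?_) hmeas
    simp [besovIntegrand, derivF z hz]
  have memF : MemBesov p F := ⟨diffF, hFint⟩
  obtain ⟨memFφ, hn1⟩ := hiso F memF
  have hGder : ∀ z : ℂ, deriv (fun w => F w - F (φ 0)) z = deriv F z := fun z =>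
    deriv_sub_const _
  have hGI : besovIntegrand p (fun w => F w - F (φ 0)) = besovIntegrand p F := by
    funext z; unfold besovIntegrand; rw [hGder z]
  have memG : MemBesov p (fun w => F w - F (φ 0)) :=
    ⟨fun z hz => ((hFd' z hz).differentiableAt.sub_const _).differentiableWithinAt,
     by rw [hGI]; exact hFint⟩
  obtain ⟨memGφ, hn2⟩ := hiso _ memG
  have hGφ : (fun w => F w - F (φ 0)) ∘ φ = fun z => (F ∘ φ) z - F (φ 0) := rfl
  have hGφI : besovIntegrand p ((fun w => F w - F (φ 0)) ∘ φ) = besovIntegrand p (F ∘ φ) := by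
    funext z; unfold besovIntegrand; rw [hGφ, deriv_sub_const]
  have hGsemi : besovSemi p (fun w => F w - F (φ 0)) = besovSemi p F := by
    unfold besovSemi; rw [hGI]
  have hGφsemi : besovSemi p ((fun w => F w - F (φ 0)) ∘ φ) = besovSemi p (F ∘ φ) := by
    unfold besovSemi; rw [hGφI]
  have e1 : besovNorm p F = besovSemi p F := by simp [besovNorm, hF0]
  have e2 : besovNorm p (F ∘ φ) = ‖F (φ 0)‖ + besovSemi p (F ∘ φ) := by
    simp [besovNorm, Function.comp]
  have e3 : besovNorm p (fun w => F w - F (φ 0)) = ‖F (φ 0)‖ + besovSemi p F := by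
    simp [besovNorm, hF0, hGsemi]
  have e4 : besovNorm p ((fun w => F w - F (φ 0)) ∘ φ) = besovSemi p (F ∘ φ) := by
    simp [besovNorm, hGφsemi, Function.comp]
  have key : besovSemi p (F ∘ φ) = besovSemi p F := by
    rw [e2, e1] at hn1; rw [e4, e3] at hn2; linarith
  have nonneg : ∀ g : ℂ → ℂ, 0 ≤ ∫ z in unitDisk, besovIntegrand p g z ∂dA := by
    intro g
    refine setIntegral_nonneg hmeas (fun z hz => ?_)
    have hz1 : ‖z‖ < 1 := by
      have : z ∈ Metric.ball (0:ℂ) 1 := hz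
      rwa [mem_ball_zero_iff] at this
    have h1 : (0:ℝ) ≤ 1 - ‖z‖^2 := by nlinarith [norm_nonneg z]
    exact mul_nonneg (Real.rpow_nonneg (norm_nonneg _) _) (Real.rpow_nonneg h1 _)
  have hp0 : p ≠ 0 := by positivity
  have hIeq : (∫ z in unitDisk, besovIntegrand p (F ∘ φ) z ∂dA)
      = ∫ z in unitDisk, besovIntegrand p F z ∂dA := by
    have h := congrArg (fun x : ℝ => x ^ p) key
    simp only [besovSemi] at h
    rwa [← Real.rpow_mul (nonneg (F ∘ φ)), ← Real.rpow_mul (nonneg F),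
      one_div_mul_cancel hp0, Real.rpow_one, Real.rpow_one] at h
  have L : (∫ z in unitDisk, ‖deriv φ z‖ ^ p * ‖f (φ z)‖ ^ p * (1 - ‖z‖ ^ 2) ^ (p - 2) ∂dA)
      = ∫ z in unitDisk, besovIntegrand p (F ∘ φ) z ∂dA := by
    refine setIntegral_congr_fun hmeas (fun z hz => ?_)
    have hφz : HasDerivAt φ (deriv φ z) z :=
      (hφ.1.differentiableAt (hopen.mem_nhds hz)).hasDerivAt
    have hcomp : HasDerivAt (F ∘ φ) (f (φ z) * deriv φ z) z :=
      (hFd' (φ z) (hφ.2 hz)).comp z hφz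
    simp only [besovIntegrand, hcomp.deriv, norm_mul]
    rw [Real.mul_rpow (norm_nonneg _) (norm_nonneg _)]
    ring
  have R : (∫ z in unitDisk, ‖f z‖ ^ p * (1 - ‖z‖ ^ 2) ^ (p - 2) ∂dA)
      = ∫ z in unitDisk, besovIntegrand p F z ∂dA := by
    refine setIntegral_congr_fun hmeas (fun z hz => ?_)
    simp [besovIntegrand, derivF z hz]
  rw [L, R, hIeq]
end

section
/- Let 1<p<∞ with p≠2. If the composition operator C_φ induced by an analytic self-map φ of the unit disk is an isometry on the analytic Besov space B_p, then φ is a full map of the disk, i.e., the set 𝔻 \ φ(𝔻) has Lebesgue area measure zero. -/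
open MeasureTheory
open scoped ENNReal NNReal

namespace IsoFull


noncomputable def wgt (p : ℝ) (z : ℂ) : ℝ := (1 - ‖z‖ ^ 2) ^ (p - 2)

lemma isOpen_unitDisk : IsOpen unitDisk := Metric.isOpen_ball

lemma measurableSet_unitDisk : MeasurableSet unitDisk := measurableSet_ball

lemma mem_unitDisk {z : ℂ} : z ∈ unitDisk ↔ ‖z‖ < 1 := mem_ball_zero_iff

lemma wgt_pos {p : ℝ} {z : ℂ} (hz : z ∈ unitDisk) : 0 < wgt p z := by
  have h1 : ‖z‖ < 1 := mem_unitDisk.1 hz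
  have : 0 < 1 - ‖z‖ ^ 2 := by nlinarith [norm_nonneg z]
  exact Real.rpow_pos_of_pos this _

lemma continuousOn_wgt {p : ℝ} : ContinuousOn (wgt p) unitDisk := by
  apply ContinuousOn.rpow_const
  · exact (continuous_const.sub ((continuous_norm).pow 2)).continuousOn
  · intro z hz
    have h1 : ‖z‖ < 1 := mem_unitDisk.1 hz
    left
    nlinarith [norm_nonneg z]

lemma rpow_pow_neg (q : ℝ) (k : ℕ) : (((2:ℝ)⁻¹) ^ (k+1)) ^ (-q) = (((2:ℝ) ^ q) ^ (k+1)) := by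
  have h2 : (0:ℝ) ≤ 2 := by norm_num
  rw [← Real.rpow_natCast ((2:ℝ)⁻¹) (k+1), ← Real.rpow_natCast ((2:ℝ)^q) (k+1),
    ← Real.rpow_mul (by norm_num : (0:ℝ) ≤ 2⁻¹), Real.inv_rpow h2, ← Real.rpow_neg h2,
    ← Real.rpow_mul h2]
  congr 1
  ring

lemma annuli_cover :
    Metric.ball (0:ℂ) 1 =
      ⋃ k : ℕ, (Metric.ball (0:ℂ) (1 - (2:ℝ)⁻¹ ^ (k+1)) \ Metric.ball (0:ℂ) (1 - (2:ℝ)⁻¹ ^ k)) := by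
  classical
  ext z
  simp only [Set.mem_iUnion, Set.mem_diff, mem_ball_zero_iff]
  constructor
  · intro hz
    have hex : ∃ k : ℕ, ‖z‖ < 1 - (2:ℝ)⁻¹ ^ (k+1) := by
      obtain ⟨n, hn⟩ := exists_pow_lt_of_lt_one (by linarith : (0:ℝ) < 1 - ‖z‖)
        (by norm_num : (2:ℝ)⁻¹ < 1)
      refine ⟨n, ?_⟩
      have : ((2:ℝ)⁻¹) ^ (n+1) ≤ (2:ℝ)⁻¹ ^ n := by
        apply pow_le_pow_of_le_one (by norm_num) (by norm_num)
        omega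
      linarith
    refine ⟨Nat.find hex, Nat.find_spec hex, ?_⟩
    cases' hk : Nat.find hex with j
    · simp
    · have := Nat.find_min hex (by omega : j < Nat.find hex)
      rw [hk] at *
      push_neg at this
      linarith
  · rintro ⟨k, hk1, _⟩
    have : (0:ℝ) ≤ (2:ℝ)⁻¹ ^ (k+1) := by positivity
    linarith

lemma integrableOn_wgt_volume {p : ℝ} (hp1 : 1 < p) :
    IntegrableOn (wgt p) unitDisk volume := by
  set q : ℝ := max (2 - p) 0 with hqdef
  have hq0 : 0 ≤ q := le_max_right _ _
  have hq1 : q < 1 := max_lt (by linarith) one_pos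
  have hqp : -q ≤ p - 2 := by
    have : 2 - p ≤ q := le_max_left _ _
    linarith
  set G : ℂ → ℝ := fun z => (1 - ‖z‖ ^ 2) ^ (-q) with hGdef
  have hbase : ∀ z ∈ unitDisk, 0 < 1 - ‖z‖ ^ 2 := by
    intro z hz
    have h1 : ‖z‖ < 1 := mem_unitDisk.1 hz
    nlinarith [norm_nonneg z]
  have hWG : ∀ z ∈ unitDisk, wgt p z ≤ G z := by
    intro z hz
    exact Real.rpow_le_rpow_of_exponent_ge (hbase z hz)
      (by nlinarith [norm_nonneg z, mem_unitDisk.1 hz]) hqp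
  have hmeasG : AEStronglyMeasurable G (volume.restrict unitDisk) := by
    refine ContinuousOn.aestronglyMeasurable ?_ measurableSet_unitDisk
    apply ContinuousOn.rpow_const
    · exact (continuous_const.sub ((continuous_norm).pow 2)).continuousOn
    · exact fun z hz => Or.inl (ne_of_gt (hbase z hz))
  -- the key finiteness
  have key : ∫⁻ z in unitDisk, ENNReal.ofReal (G z) ∂volume < ⊤ := by
    have hcover := annuli_cover
    set A : ℕ → Set ℂ :=
      fun k => Metric.ball (0:ℂ) (1 - (2:ℝ)⁻¹ ^ (k+1)) \ Metric.ball (0:ℂ) (1 - (2:ℝ)⁻¹ ^ k)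
      with hAdef
    have hmeasA : ∀ k, MeasurableSet (A k) := fun k =>
      measurableSet_ball.diff measurableSet_ball
    have hdisj : Pairwise (Function.onFun Disjoint A) := by
      rw [pairwise_disjoint_on]
      intro m n hmn
      refine Set.disjoint_left.2 fun z hzm hzn => ?_
      have h1 : ‖z‖ < 1 - (2:ℝ)⁻¹ ^ (m+1) := mem_ball_zero_iff.1 hzm.1
      have h2 : ¬ (‖z‖ < 1 - (2:ℝ)⁻¹ ^ n) := fun h => hzn.2 (mem_ball_zero_iff.2 h)
      push_neg at h2
      have : (2:ℝ)⁻¹ ^ n ≤ (2:ℝ)⁻¹ ^ (m+1) := by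
        apply pow_le_pow_of_le_one (by norm_num) (by norm_num)
        omega
      linarith
    have hDeq : unitDisk = ⋃ k, A k := hcover
    rw [hDeq, lintegral_iUnion hmeasA hdisj]
    have hrk0 : ∀ k : ℕ, (0:ℝ) ≤ 1 - (2:ℝ)⁻¹ ^ k := by
      intro k
      have : ((2:ℝ)⁻¹) ^ k ≤ 1 := pow_le_one₀ (by norm_num) (by norm_num)
      linarith
    have htermbound : ∀ k : ℕ,
        ∫⁻ z in A k, ENNReal.ofReal (G z) ∂volume ≤
          ENNReal.ofReal ((2:ℝ)^q * (2 * Real.pi)) * (ENNReal.ofReal ((2:ℝ)^(q-1)))^k := by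
      intro k
      have hGb : ∀ z ∈ A k, G z ≤ ((2:ℝ)^q)^(k+1) := by
        intro z hz
        have h1 : ‖z‖ < 1 - (2:ℝ)⁻¹ ^ (k+1) := mem_ball_zero_iff.1 hz.1
        have h0 : (0:ℝ) < (2:ℝ)⁻¹ ^ (k+1) := by positivity
        have hz1 : ‖z‖ < 1 := by linarith
        have hle : (2:ℝ)⁻¹ ^ (k+1) ≤ 1 - ‖z‖ ^ 2 := by nlinarith [norm_nonneg z]
        calc G z ≤ ((2:ℝ)⁻¹ ^ (k+1)) ^ (-q) :=
              Real.rpow_le_rpow_of_nonpos h0 hle (by linarith)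
          _ = ((2:ℝ)^q)^(k+1) := rpow_pow_neg q k
      have hstep1 : ∫⁻ z in A k, ENNReal.ofReal (G z) ∂volume ≤
          ENNReal.ofReal (((2:ℝ)^q)^(k+1)) * volume (A k) := by
        rw [← setLIntegral_const]
        refine lintegral_mono_ae ?_
        rw [ae_restrict_iff' (hmeasA k)]
        exact Filter.Eventually.of_forall fun z hz => ENNReal.ofReal_le_ofReal (hGb z hz)
      have hvol : volume (A k) ≤ ENNReal.ofReal (Real.pi * (2 * (2:ℝ)⁻¹ ^ k)) := by
        have hsub : A k ⊆ Metric.ball (0:ℂ) 1 \ Metric.ball (0:ℂ) (1 - (2:ℝ)⁻¹ ^ k) := by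
          apply Set.diff_subset_diff_left
          apply Metric.ball_subset_ball
          have : (0:ℝ) ≤ (2:ℝ)⁻¹ ^ (k+1) := by positivity
          linarith
        refine le_trans (measure_mono hsub) ?_
        rw [measure_diff (Metric.ball_subset_ball (by linarith [hrk0 k, (by positivity : (0:ℝ) ≤ (2:ℝ)⁻¹ ^ k)] : 1 - (2:ℝ)⁻¹ ^ k ≤ 1)) measurableSet_ball.nullMeasurableSet measure_ball_lt_top.ne]
        rw [Complex.volume_ball, Complex.volume_ball]
        have hpi : ((NNReal.pi : ℝ≥0∞)) = ENNReal.ofReal Real.pi := by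
          rw [← NNReal.coe_real_pi, ENNReal.ofReal_coe_nnreal]
        rw [hpi, ← ENNReal.ofReal_pow (by norm_num : (0:ℝ) ≤ 1),
          ← ENNReal.ofReal_pow (hrk0 k), ← ENNReal.ofReal_mul (by positivity),
          ← ENNReal.ofReal_mul (by positivity), ← ENNReal.ofReal_sub _ (by positivity)]
        apply ENNReal.ofReal_le_ofReal
        have h1k : 1 - (2:ℝ)⁻¹ ^ k ≤ 1 := by
          have : (0:ℝ) ≤ (2:ℝ)⁻¹ ^ k := by positivity
          linarith
        have ha : (0:ℝ) ≤ (2:ℝ)⁻¹ ^ k := by positivity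
        nlinarith [Real.pi_pos, mul_nonneg Real.pi_pos.le (sq_nonneg ((2:ℝ)⁻¹ ^ k))]
      calc ∫⁻ z in A k, ENNReal.ofReal (G z) ∂volume
          ≤ ENNReal.ofReal (((2:ℝ)^q)^(k+1)) * ENNReal.ofReal (Real.pi * (2 * (2:ℝ)⁻¹ ^ k)) := by
            exact le_trans hstep1 (mul_le_mul_right hvol _)
        _ = ENNReal.ofReal ((2:ℝ)^q * (2 * Real.pi)) * (ENNReal.ofReal ((2:ℝ)^(q-1)))^k := by
            rw [← ENNReal.ofReal_mul (by positivity), ← ENNReal.ofReal_pow (by positivity),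
              ← ENNReal.ofReal_mul (by positivity)]
            congr 1
            have h2q : (2:ℝ)^(q-1) = (2:ℝ)^q * 2⁻¹ := by
              rw [Real.rpow_sub (by norm_num : (0:ℝ) < 2), Real.rpow_one]
              ring
            rw [h2q, mul_pow, pow_succ]
            ring
    refine lt_of_le_of_lt (ENNReal.tsum_le_tsum htermbound) ?_
    rw [ENNReal.tsum_mul_left, ENNReal.tsum_geometric]
    have hrho : ENNReal.ofReal ((2:ℝ)^(q-1)) < 1 := by
      rw [← ENNReal.ofReal_one]
      apply ENNReal.ofReal_lt_ofReal_iff_of_nonneg (by positivity) |>.2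
      exact Real.rpow_lt_one_of_one_lt_of_neg (by norm_num) (by linarith)
    apply ENNReal.mul_lt_top ENNReal.ofReal_lt_top
    rw [lt_top_iff_ne_top]
    apply ENNReal.inv_ne_top.2
    rw [← pos_iff_ne_zero, tsub_pos_iff_lt]
    exact hrho
  -- assemble integrability
  have hGnn : ∀ᵐ z ∂(volume.restrict unitDisk), 0 ≤ G z := by
    rw [ae_restrict_iff' measurableSet_unitDisk]
    exact Filter.Eventually.of_forall fun z hz => (Real.rpow_pos_of_pos (hbase z hz) _).le
  have hGint : IntegrableOn G unitDisk volume := by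
    refine ⟨hmeasG, ?_⟩
    rw [hasFiniteIntegral_iff_ofReal hGnn]
    exact key
  refine hGint.mono' ?_ ?_
  · exact continuousOn_wgt.aestronglyMeasurable measurableSet_unitDisk
  · rw [ae_restrict_iff' measurableSet_unitDisk]
    refine Filter.Eventually.of_forall fun z hz => ?_
    rw [Real.norm_eq_abs, abs_of_pos (wgt_pos hz)]
    exact hWG z hz



lemma besovIntegrand_nonneg {p : ℝ} {f : ℂ → ℂ} {z : ℂ} (hz : z ∈ unitDisk) :
    0 ≤ besovIntegrand p f z :=
  mul_nonneg (Real.rpow_nonneg (norm_nonneg _) _) (wgt_pos (p := p) hz).le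

lemma integrableOn_dA_iff {f : ℂ → ℝ} {s : Set ℂ} :
    IntegrableOn f s dA ↔ IntegrableOn f s volume := by
  unfold IntegrableOn dA
  rw [Measure.restrict_smul]
  refine integrable_smul_measure ?_ ?_
  · exact ENNReal.inv_ne_zero.2 ENNReal.ofReal_ne_top
  · refine ENNReal.inv_ne_top.2 ?_
    simp only [ne_eq, ENNReal.ofReal_eq_zero, not_le]
    exact Real.pi_pos

lemma integrableOn_wgt {p : ℝ} (hp1 : 1 < p) : IntegrableOn (wgt p) unitDisk dA :=
  integrableOn_dA_iff.2 (integrableOn_wgt_volume hp1)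

lemma iso_integral_eq {p : ℝ} {φ : ℂ → ℂ} (hiso : IsBesovIsometry p φ) (hp0 : 0 < p)
    {f : ℂ → ℂ} (hf : MemBesov p f) :
    IntegrableOn (besovIntegrand p (f ∘ φ)) unitDisk dA ∧
      ∫ z in unitDisk, besovIntegrand p (f ∘ φ) z ∂dA
        = ∫ z in unitDisk, besovIntegrand p f z ∂dA := by
  refine ⟨(hiso f hf).1.2, ?_⟩
  have hkey : ∀ c : ℂ, ‖f (φ 0) + c‖ + besovSemi p (f ∘ φ) = ‖f 0 + c‖ + besovSemi p f := by
    intro c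
    have hfc : MemBesov p (fun z => f z + c) := by
      refine ⟨hf.1.add_const c, ?_⟩
      have h1 : besovIntegrand p (fun z => f z + c) = besovIntegrand p f := by
        funext z; unfold besovIntegrand; rw [deriv_add_const]
      rw [h1]; exact hf.2
    have h2 := (hiso _ hfc).2
    have h3 : ((fun z => f z + c) ∘ φ) = fun z => (f ∘ φ) z + c := rfl
    rw [h3] at h2
    have h4 : besovSemi p (fun z => (f ∘ φ) z + c) = besovSemi p (f ∘ φ) := by
      unfold besovSemi
      have h5 : besovIntegrand p (fun z => (f ∘ φ) z + c) = besovIntegrand p (f ∘ φ) := by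
        funext z; unfold besovIntegrand; rw [deriv_add_const]
      rw [h5]
    unfold besovNorm at h2
    rw [h4] at h2
    have h6 : besovSemi p (fun z => f z + c) = besovSemi p f := by
      unfold besovSemi
      have h7 : besovIntegrand p (fun z => f z + c) = besovIntegrand p f := by
        funext z; unfold besovIntegrand; rw [deriv_add_const]
      rw [h7]
    rw [h6] at h2
    simpa using h2
  have e1 := hkey (-(f 0))
  have e2 := hkey (-(f (φ 0)))
  have e1' : ‖f (φ 0) - f 0‖ + besovSemi p (f ∘ φ) = besovSemi p f := by
    simpa [sub_eq_add_neg] using e1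
  have e2' : besovSemi p (f ∘ φ) = ‖f 0 - f (φ 0)‖ + besovSemi p f := by
    simpa [sub_eq_add_neg] using e2
  have hrev : ‖f 0 - f (φ 0)‖ = ‖f (φ 0) - f 0‖ := norm_sub_rev _ _
  have hS : besovSemi p (f ∘ φ) = besovSemi p f := by
    rw [hrev] at e2'
    linarith
  have hI1 : 0 ≤ ∫ z in unitDisk, besovIntegrand p (f ∘ φ) z ∂dA :=
    setIntegral_nonneg measurableSet_unitDisk fun z hz => besovIntegrand_nonneg hz
  have hI2 : 0 ≤ ∫ z in unitDisk, besovIntegrand p f z ∂dA :=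
    setIntegral_nonneg measurableSet_unitDisk fun z hz => besovIntegrand_nonneg hz
  have hSS := congrArg (fun x : ℝ => x ^ p) hS
  unfold besovSemi at hSS
  simp only [one_div] at hSS
  rwa [Real.rpow_inv_rpow hI1 hp0.ne', Real.rpow_inv_rpow hI2 hp0.ne'] at hSS

lemma besovIntegrand_comp {p : ℝ} {φ : ℂ → ℂ} (hφ : IsAnalyticSelfMap φ) {f : ℂ → ℂ}
    (hf : DifferentiableOn ℂ f unitDisk) {z : ℂ} (hz : z ∈ unitDisk) :
    besovIntegrand p (f ∘ φ) z = ‖deriv f (φ z)‖ ^ p * besovIntegrand p φ z := by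
  have hdφ : DifferentiableAt ℂ φ z := hφ.1.differentiableAt (isOpen_unitDisk.mem_nhds hz)
  have hdf : DifferentiableAt ℂ f (φ z) :=
    hf.differentiableAt (isOpen_unitDisk.mem_nhds (hφ.2 hz))
  unfold besovIntegrand
  rw [deriv_comp z hdf hdφ, norm_mul, Real.mul_rpow (norm_nonneg _) (norm_nonneg _), mul_assoc]

lemma besovIntegrand_id {p : ℝ} : besovIntegrand p id = wgt p := by
  funext z
  unfold besovIntegrand wgt
  rw [deriv_id, norm_one, Real.one_rpow, one_mul]

lemma memBesov_id {p : ℝ} (hp1 : 1 < p) : MemBesov p id :=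
  ⟨differentiableOn_id, by rw [besovIntegrand_id]; exact integrableOn_wgt hp1⟩

lemma weight_int {p : ℝ} {φ : ℂ → ℂ} (hp1 : 1 < p) (hiso : IsBesovIsometry p φ) :
    IntegrableOn (besovIntegrand p φ) unitDisk dA ∧
      ∫ z in unitDisk, besovIntegrand p φ z ∂dA = ∫ z in unitDisk, wgt p z ∂dA := by
  have h := iso_integral_eq hiso (by linarith) (memBesov_id hp1)
  rw [Function.id_comp, besovIntegrand_id] at h
  exact h

noncomputable def eker (ξ z : ℂ) : ℝ := Real.exp ((starRingEnd ℂ ξ * z).re)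

lemma eker_mul (ξ η z : ℂ) : eker ξ z * eker η z = eker (ξ + η) z := by
  unfold eker
  rw [← Real.exp_add, map_add, add_mul, Complex.add_re]

lemma eker_zero (z : ℂ) : eker 0 z = 1 := by simp [eker]

lemma eker_pos (ξ z : ℂ) : 0 < eker ξ z := Real.exp_pos _

lemma continuous_eker (ξ : ℂ) : Continuous (eker ξ) :=
  Real.continuous_exp.comp (Complex.continuous_re.comp (continuous_const.mul continuous_id))

lemma eker_le (ξ : ℂ) {z : ℂ} (hz : ‖z‖ ≤ 1) : eker ξ z ≤ Real.exp ‖ξ‖ := by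
  unfold eker
  apply Real.exp_le_exp.2
  calc (starRingEnd ℂ ξ * z).re ≤ ‖starRingEnd ℂ ξ * z‖ := by
        exact Complex.re_le_norm _
    _ = ‖ξ‖ * ‖z‖ := by rw [norm_mul, RCLike.norm_conj]
    _ ≤ ‖ξ‖ := mul_le_of_le_one_right (norm_nonneg _) hz

lemma good_eker {p : ℝ} {φ : ℂ → ℂ} (hp1 : 1 < p) (hφ : IsAnalyticSelfMap φ)
    (hiso : IsBesovIsometry p φ) (ξ : ℂ) :
    IntegrableOn (fun z => eker ξ (φ z) * besovIntegrand p φ z) unitDisk dA ∧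
    IntegrableOn (fun z => eker ξ z * wgt p z) unitDisk dA ∧
    ∫ z in unitDisk, eker ξ (φ z) * besovIntegrand p φ z ∂dA
      = ∫ z in unitDisk, eker ξ z * wgt p z ∂dA := by
  have hp0 : (0:ℝ) < p := by linarith
  have hint_rhs : IntegrableOn (fun z => eker ξ z * wgt p z) unitDisk dA := by
    refine Integrable.mono' ((integrableOn_wgt hp1).const_mul (Real.exp ‖ξ‖)) ?_ ?_
    · exact (((continuous_eker ξ).continuousOn).mul continuousOn_wgt).aestronglyMeasurable
        measurableSet_unitDisk
    · rw [ae_restrict_iff' measurableSet_unitDisk]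
      refine Filter.Eventually.of_forall fun z hz => ?_
      rw [Real.norm_eq_abs, abs_of_pos (mul_pos (eker_pos ξ z) (wgt_pos hz))]
      exact mul_le_mul_of_nonneg_right (eker_le ξ (le_of_lt (mem_unitDisk.1 hz)))
        (wgt_pos hz).le
  rcases eq_or_ne ξ 0 with rfl | hξ
  · simp only [eker_zero, one_mul]
    simp only [eker_zero, one_mul] at hint_rhs
    exact ⟨(weight_int hp1 hiso).1, hint_rhs, (weight_int hp1 hiso).2⟩
  · set c : ℂ := starRingEnd ℂ ξ with hcdef
    have hc : c ≠ 0 := by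
      intro h
      apply hξ
      have := congrArg (starRingEnd ℂ) h
      simpa [hcdef] using this
    have hpC : (p:ℂ) ≠ 0 := Complex.ofReal_ne_zero.2 hp0.ne'
    set f : ℂ → ℂ := fun z => ((p:ℂ)/c) * Complex.exp ((c/(p:ℂ)) * z) with hfdef
    have hder : ∀ z : ℂ, HasDerivAt f (Complex.exp ((c/(p:ℂ)) * z)) z := by
      intro z
      have h1 : HasDerivAt (fun w : ℂ => (c/(p:ℂ)) * w) (c/(p:ℂ)) z := by
        simpa using (hasDerivAt_id z).const_mul (c/(p:ℂ))
      have h2 := (Complex.hasDerivAt_exp ((c/(p:ℂ)) * z)).comp z h1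
      have h3 := h2.const_mul ((p:ℂ)/c)
      refine h3.congr_deriv ?_
      field_simp
    have hderiv : ∀ z, deriv f z = Complex.exp ((c/(p:ℂ)) * z) := fun z => (hder z).deriv
    have hnorm : ∀ z : ℂ, ‖deriv f z‖ ^ p = eker ξ z := by
      intro z
      rw [hderiv z, Complex.norm_exp]
      have hre : ((c/(p:ℂ)) * z).re = (c*z).re / p := by
        rw [div_mul_eq_mul_div, Complex.div_ofReal_re]
      rw [hre, ← Real.exp_mul, div_mul_cancel₀ _ hp0.ne']
      rfl
    have hbif : besovIntegrand p f = fun z => eker ξ z * wgt p z := by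
      funext z
      unfold besovIntegrand
      rw [hnorm z]
      rfl
    have hmemf : MemBesov p f :=
      ⟨(Differentiable.differentiableOn (fun z => (hder z).differentiableAt)), by rw [hbif]; exact hint_rhs⟩
    obtain ⟨hint1, heq⟩ := iso_integral_eq hiso hp0 hmemf
    have hEq : Set.EqOn (besovIntegrand p (f ∘ φ))
        (fun z => eker ξ (φ z) * besovIntegrand p φ z) unitDisk := by
      intro z hz
      rw [besovIntegrand_comp hφ (fun w _ => (hder w).differentiableAt.differentiableWithinAt) hz,
        hnorm]
    refine ⟨hint1.congr_fun hEq measurableSet_unitDisk, hint_rhs, ?_⟩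
    rw [← setIntegral_congr_fun measurableSet_unitDisk hEq, heq, hbif]

lemma continuousOn_bIphi {p : ℝ} {φ : ℂ → ℂ} (hp1 : 1 < p) (hφ : IsAnalyticSelfMap φ) :
    ContinuousOn (besovIntegrand p φ) unitDisk := by
  have hd : ContinuousOn (deriv φ) unitDisk :=
    ((hφ.1.analyticOnNhd isOpen_unitDisk).deriv).continuousOn
  unfold besovIntegrand
  apply ContinuousOn.mul
  · refine ContinuousOn.rpow_const hd.norm fun z hz => Or.inr (by linarith)
  · exact continuousOn_wgt

lemma transfer {p : ℝ} {φ : ℂ → ℂ} (hp1 : 1 < p) (hφ : IsAnalyticSelfMap φ)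
    (hiso : IsBesovIsometry p φ) {F : ℂ → ℝ} (hF : Continuous F) :
    ∫ z in unitDisk, F (φ z) * besovIntegrand p φ z ∂dA
      = ∫ z in unitDisk, F z * wgt p z ∂dA := by
  have hp0 : (0:ℝ) < p := by linarith
  set K0 : Set ℂ := Metric.closedBall (0:ℂ) 1 with hK0def
  have hDK : unitDisk ⊆ K0 := Metric.ball_subset_closedBall
  haveI : CompactSpace K0 := isCompact_iff_compactSpace.mp (isCompact_closedBall _ _)
  -- the subalgebra generated by the exponential kernels
  set gen : ℂ → C(K0, ℝ) :=
    fun ξ => ⟨fun z => eker ξ z, (continuous_eker ξ).comp continuous_subtype_val⟩ with hgendef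
  set gens : Set C(K0, ℝ) := Set.range gen with hgensdef
  set A : Subalgebra ℝ C(K0, ℝ) := Algebra.adjoin ℝ gens with hAdef
  -- Good property
  set Good : (ℂ → ℝ) → Prop := fun g =>
    IntegrableOn (fun z => g (φ z) * besovIntegrand p φ z) unitDisk dA ∧
    IntegrableOn (fun z => g z * wgt p z) unitDisk dA ∧
    ∫ z in unitDisk, g (φ z) * besovIntegrand p φ z ∂dA
      = ∫ z in unitDisk, g z * wgt p z ∂dA with hGooddef
  -- every element of A is represented by a Good function
  have hA_rep : ∀ G ∈ A, ∃ g : ℂ → ℝ, Good g ∧ ∀ z : K0, G z = g z := by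
    intro G hG
    have hspan : G ∈ Submodule.span ℝ gens := by
      have h2 : G ∈ Submodule.span ℝ ((Submonoid.closure gens : Submonoid C(K0,ℝ)) : Set C(K0,ℝ)) := by
        have := Algebra.adjoin_eq_span (R := ℝ) (s := gens)
        have h3 : G ∈ Subalgebra.toSubmodule (Algebra.adjoin ℝ gens) := hG
        rwa [this] at h3
      -- the generators form a submonoid
      set M : Submonoid C(K0, ℝ) :=
        { carrier := gens
          one_mem' := ⟨0, by ext z; simp [hgendef, eker_zero]⟩
          mul_mem' := by
            rintro a b ⟨ξ, rfl⟩ ⟨η, rfl⟩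
            exact ⟨ξ + η, by ext z; exact (eker_mul ξ η z).symm⟩ } with hMdef
      have hle : Submonoid.closure gens ≤ M := Submonoid.closure_le.2 subset_rfl
      exact Submodule.span_le.2
        (fun x hx => Submodule.subset_span (hle hx)) h2
    refine Submodule.span_induction ?_ ?_ ?_ ?_ hspan
    · rintro x ⟨ξ, rfl⟩
      obtain ⟨hi1, hi2, hi3⟩ := good_eker hp1 hφ hiso ξ
      exact ⟨eker ξ, ⟨hi1, hi2, hi3⟩, fun z => rfl⟩
    · refine ⟨fun _ => 0, ⟨?_, ?_, by simp⟩, fun z => rfl⟩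
      · simpa using (integrable_zero ℂ ℝ (dA.restrict unitDisk))
      · simpa using (integrable_zero ℂ ℝ (dA.restrict unitDisk))
    · rintro x y hx hy ⟨g1, ⟨hg1a, hg1b, hg1c⟩, he1⟩ ⟨g2, ⟨hg2a, hg2b, hg2c⟩, he2⟩
      refine ⟨g1 + g2, ⟨?_, ?_, ?_⟩, fun z => by
        simp [ContinuousMap.add_apply, he1 z, he2 z]⟩
      · simpa [add_mul, Pi.add_def] using hg1a.add hg2a
      · simpa [add_mul, Pi.add_def] using hg1b.add hg2b
      · have h1 : ∀ z : ℂ, (g1 + g2) (φ z) * besovIntegrand p φ z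
            = g1 (φ z) * besovIntegrand p φ z + g2 (φ z) * besovIntegrand p φ z := by
          intro z; simp [add_mul]
        have h2 : ∀ z : ℂ, (g1 + g2) z * wgt p z = g1 z * wgt p z + g2 z * wgt p z := by
          intro z; simp [add_mul]
        simp only [h1, h2]
        rw [integral_add hg1a hg2a, integral_add hg1b hg2b, hg1c, hg2c]
    · rintro a x hx ⟨g, ⟨hga, hgb, hgc⟩, he⟩
      refine ⟨a • g, ⟨?_, ?_, ?_⟩, fun z => by
        simp [ContinuousMap.smul_apply, he z]⟩
      · simpa [Pi.smul_apply, smul_eq_mul, mul_assoc, IntegrableOn] using hga.const_mul a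
      · simpa [Pi.smul_apply, smul_eq_mul, mul_assoc, IntegrableOn] using hgb.const_mul a
      · have h1 : ∀ z : ℂ, (a • g) (φ z) * besovIntegrand p φ z
            = a • (g (φ z) * besovIntegrand p φ z) := by
          intro z; simp [smul_eq_mul]; ring
        have h2 : ∀ z : ℂ, (a • g) z * wgt p z = a • (g z * wgt p z) := by
          intro z; simp [smul_eq_mul]; ring
        simp only [h1, h2]
        rw [integral_smul, integral_smul, hgc]
  -- A separates points
  have hsep : A.SeparatesPoints := by
    intro x y hxy
    have hxyne : (x : ℂ) ≠ (y : ℂ) := Subtype.coe_injective.ne hxy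
    refine ⟨gen ((x : ℂ) - (y : ℂ)), ⟨gen ((x : ℂ) - (y : ℂ)),
      Algebra.subset_adjoin ⟨(x : ℂ) - (y : ℂ), rfl⟩, rfl⟩, ?_⟩
    intro heq
    have h1 : (starRingEnd ℂ ((x:ℂ) - y) * x).re = (starRingEnd ℂ ((x:ℂ) - y) * y).re :=
      Real.exp_injective heq
    have h2 : (starRingEnd ℂ ((x:ℂ) - y) * ((x:ℂ) - y)).re = 0 := by
      rw [mul_sub, Complex.sub_re, h1, sub_self]
    rw [mul_comm, Complex.mul_conj, Complex.ofReal_re] at h2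
    exact (Complex.normSq_pos.2 (sub_ne_zero.2 hxyne)).ne' h2
  have htop := ContinuousMap.subalgebra_topologicalClosure_eq_top_of_separatesPoints A hsep
  set FK : C(K0, ℝ) := ⟨fun z => F z, hF.comp continuous_subtype_val⟩ with hFKdef
  have hFKmem : FK ∈ closure (A : Set C(K0, ℝ)) := by
    have h1 : FK ∈ A.topologicalClosure := by rw [htop]; trivial
    rwa [← Subalgebra.topologicalClosure_coe]
  -- integrability of the F-integrands
  obtain ⟨M0, hM0⟩ := (isCompact_closedBall (0:ℂ) 1).exists_bound_of_continuousOn hF.continuousOn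
  have hmInt : IntegrableOn (besovIntegrand p φ) unitDisk dA := (weight_int hp1 hiso).1
  have hintF1 : IntegrableOn (fun z => F (φ z) * besovIntegrand p φ z) unitDisk dA := by
    refine Integrable.mono' (hmInt.const_mul M0) ?_ ?_
    · exact ((hF.comp_continuousOn hφ.1.continuousOn).mul
        (continuousOn_bIphi hp1 hφ)).aestronglyMeasurable measurableSet_unitDisk
    · rw [ae_restrict_iff' measurableSet_unitDisk]
      refine Filter.Eventually.of_forall fun z hz => ?_
      have hm0 : 0 ≤ besovIntegrand p φ z := besovIntegrand_nonneg hz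
      rw [Real.norm_eq_abs, abs_mul, abs_of_nonneg hm0]
      exact mul_le_mul_of_nonneg_right (hM0 (φ z) (hDK (hφ.2 hz))) hm0
  have hintF2 : IntegrableOn (fun z => F z * wgt p z) unitDisk dA := by
    refine Integrable.mono' ((integrableOn_wgt hp1).const_mul M0) ?_ ?_
    · exact (hF.continuousOn.mul continuousOn_wgt).aestronglyMeasurable measurableSet_unitDisk
    · rw [ae_restrict_iff' measurableSet_unitDisk]
      refine Filter.Eventually.of_forall fun z hz => ?_
      have hw0 : 0 ≤ wgt p z := (wgt_pos hz).le
      rw [Real.norm_eq_abs, abs_mul, abs_of_nonneg hw0]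
      exact mul_le_mul_of_nonneg_right (hM0 z (hDK hz)) hw0
  -- nonnegativity of total masses
  set Im : ℝ := ∫ z in unitDisk, besovIntegrand p φ z ∂dA with hImdef
  set Iw : ℝ := ∫ z in unitDisk, wgt p z ∂dA with hIwdef
  have hIm0 : 0 ≤ Im := setIntegral_nonneg measurableSet_unitDisk
    fun z hz => besovIntegrand_nonneg hz
  have hIw0 : 0 ≤ Iw := setIntegral_nonneg measurableSet_unitDisk fun z hz => (wgt_pos hz).le
  set d : ℝ := (∫ z in unitDisk, F (φ z) * besovIntegrand p φ z ∂dA)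
    - ∫ z in unitDisk, F z * wgt p z ∂dA with hddef
  have hsmall : ∀ ε > (0:ℝ), |d| ≤ ε * (Im + Iw) := by
    intro ε hε
    obtain ⟨G, hGA, hGd⟩ := Metric.mem_closure_iff.1 hFKmem ε hε
    obtain ⟨g, ⟨hga, hgb, hgc⟩, hrep⟩ := hA_rep G hGA
    have hpt : ∀ w ∈ K0, |F w - g w| ≤ ε := by
      intro w hw
      have h1 := ContinuousMap.dist_apply_le_dist (f := FK) (g := G) ⟨w, hw⟩
      rw [hrep ⟨w, hw⟩] at h1
      have h2 : dist (FK ⟨w, hw⟩) (g w) = |F w - g w| := Real.dist_eq _ _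
      rw [h2] at h1
      linarith [le_of_lt hGd]
    have hb1 : |(∫ z in unitDisk, F (φ z) * besovIntegrand p φ z ∂dA)
        - ∫ z in unitDisk, g (φ z) * besovIntegrand p φ z ∂dA| ≤ ε * Im := by
      rw [← integral_sub hintF1 hga]
      calc |∫ z in unitDisk, (F (φ z) * besovIntegrand p φ z
              - g (φ z) * besovIntegrand p φ z) ∂dA|
          ≤ ∫ z in unitDisk, ‖F (φ z) * besovIntegrand p φ z
              - g (φ z) * besovIntegrand p φ z‖ ∂dA := by
            rw [← Real.norm_eq_abs]
            exact norm_integral_le_integral_norm _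
        _ ≤ ∫ z in unitDisk, ε * besovIntegrand p φ z ∂dA := by
            refine setIntegral_mono_on ((hintF1.sub hga).norm) (hmInt.const_mul ε)
              measurableSet_unitDisk fun z hz => ?_
            have hm0 : 0 ≤ besovIntegrand p φ z := besovIntegrand_nonneg hz
            rw [Real.norm_eq_abs, ← sub_mul, abs_mul, abs_of_nonneg hm0]
            exact mul_le_mul_of_nonneg_right (hpt (φ z) (hDK (hφ.2 hz))) hm0
        _ = ε * Im := by rw [integral_const_mul]
    have hb2 : |(∫ z in unitDisk, F z * wgt p z ∂dA)
        - ∫ z in unitDisk, g z * wgt p z ∂dA| ≤ ε * Iw := by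
      rw [← integral_sub hintF2 hgb]
      calc |∫ z in unitDisk, (F z * wgt p z - g z * wgt p z) ∂dA|
          ≤ ∫ z in unitDisk, ‖F z * wgt p z - g z * wgt p z‖ ∂dA := by
            rw [← Real.norm_eq_abs]
            exact norm_integral_le_integral_norm _
        _ ≤ ∫ z in unitDisk, ε * wgt p z ∂dA := by
            refine setIntegral_mono_on ((hintF2.sub hgb).norm) ((integrableOn_wgt hp1).const_mul ε)
              measurableSet_unitDisk fun z hz => ?_
            have hw0 : 0 ≤ wgt p z := (wgt_pos hz).le
            rw [Real.norm_eq_abs, ← sub_mul, abs_mul, abs_of_nonneg hw0]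
            exact mul_le_mul_of_nonneg_right (hpt z (hDK hz)) hw0
        _ = ε * Iw := by rw [integral_const_mul]
    calc |d| = |((∫ z in unitDisk, F (φ z) * besovIntegrand p φ z ∂dA)
          - ∫ z in unitDisk, g (φ z) * besovIntegrand p φ z ∂dA)
          + ((∫ z in unitDisk, g z * wgt p z ∂dA) - ∫ z in unitDisk, F z * wgt p z ∂dA)| := by
          rw [hddef]; congr 1; rw [hgc]; ring
      _ ≤ ε * Im + ε * Iw := by
          refine le_trans (abs_add_le _ _) ?_
          have := abs_sub_comm (∫ z in unitDisk, g z * wgt p z ∂dA)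
            (∫ z in unitDisk, F z * wgt p z ∂dA)
          exact add_le_add hb1 (by rwa [this])
      _ = ε * (Im + Iw) := by ring
  have hd0 : d = 0 := by
    by_contra hne
    have habs : 0 < |d| := abs_pos.2 hne
    have hT : (0:ℝ) < Im + Iw + 1 := by linarith
    have h1 := hsmall (|d| / (2 * (Im + Iw + 1))) (by positivity)
    have h2 : |d| / (2 * (Im + Iw + 1)) * (Im + Iw) ≤ |d| / 2 := by
      rw [div_mul_eq_mul_div, div_le_div_iff₀ (by positivity) (by norm_num)]
      nlinarith
    linarith
  exact sub_eq_zero.1 hd0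

lemma intw_pos {p : ℝ} (hp1 : 1 < p) : 0 < ∫ z in unitDisk, wgt p z ∂dA := by
  rw [setIntegral_pos_iff_support_of_nonneg_ae ?hnn (integrableOn_wgt hp1)]
  case hnn =>
    have h : ∀ᵐ z ∂(dA.restrict unitDisk), 0 ≤ wgt p z := by
      rw [ae_restrict_iff' measurableSet_unitDisk]
      exact Filter.Eventually.of_forall fun z hz => (wgt_pos hz).le
    exact h
  have hsub : unitDisk ⊆ Function.support (wgt p) ∩ unitDisk :=
    fun z hz => ⟨(wgt_pos hz).ne', hz⟩
  refine lt_of_lt_of_le ?_ (measure_mono hsub)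
  have h1 : dA unitDisk = (ENNReal.ofReal Real.pi)⁻¹ * volume unitDisk := by
    rw [dA, Measure.smul_apply, smul_eq_mul]
  rw [h1]
  refine ENNReal.mul_pos ?_ ?_
  · exact ENNReal.inv_ne_zero.2 ENNReal.ofReal_ne_top
  · exact (Metric.measure_ball_pos volume (0:ℂ) one_pos).ne'

theorem main {p : ℝ} (hp1 : 1 < p) (φ : ℂ → ℂ)
    (hφ : IsAnalyticSelfMap φ) (hiso : IsBesovIsometry p φ) :
    volume (unitDisk \ (φ '' unitDisk)) = 0 := by
  classical
  have hp0 : (0:ℝ) < p := by linarith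
  obtain ⟨hφd, hφm⟩ := hφ
  obtain ⟨hmInt, htot⟩ := weight_int hp1 hiso
  have hBpos : 0 < ∫ z in unitDisk, wgt p z ∂dA := intw_pos hp1
  -- φ is nonconstant
  have hz0 : ∃ z0 ∈ unitDisk, deriv φ z0 ≠ 0 := by
    by_contra hall
    push_neg at hall
    have h0 : ∫ z in unitDisk, besovIntegrand p φ z ∂dA = 0 := by
      rw [setIntegral_congr_fun measurableSet_unitDisk
        (g := fun _ => (0:ℝ)) fun z hz => ?_]
      · simp
      · unfold besovIntegrand
        rw [hall z hz, norm_zero, Real.zero_rpow hp0.ne', zero_mul]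
    rw [h0] at htot
    linarith
  obtain ⟨z0, hz0D, hz0ne⟩ := hz0
  -- the image is open
  set Ω : Set ℂ := φ '' unitDisk with hΩdef
  have hΩopen : IsOpen Ω := by
    have hana : AnalyticOnNhd ℂ φ unitDisk := hφd.analyticOnNhd isOpen_unitDisk
    have hpre : IsPreconnected unitDisk := (convex_ball (0:ℂ) 1).isPreconnected
    rcases hana.is_constant_or_isOpen hpre with ⟨w0, hw0⟩ | hopen
    · exfalso
      apply hz0ne
      have hev : φ =ᶠ[nhds z0] fun _ => w0 :=
        Filter.eventually_of_mem (isOpen_unitDisk.mem_nhds hz0D) fun z hz => hw0 z hz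
      rw [hev.deriv_eq]
      exact deriv_const _ _
    · exact hopen unitDisk subset_rfl isOpen_unitDisk
  have hΩD : Ω ⊆ unitDisk := hφm.image_subset
  -- the compact complement
  set K0 : Set ℂ := Metric.closedBall (0:ℂ) 1 with hK0def
  have hDK : unitDisk ⊆ K0 := Metric.ball_subset_closedBall
  set Kc : Set ℂ := K0 \ Ω with hKcdef
  have hKcclosed : IsClosed Kc := IsClosed.sdiff Metric.isClosed_closedBall hΩopen
  have hKcne : Kc.Nonempty := by
    refine ⟨1, ?_, fun h => ?_⟩
    · simp [hK0def]
    · have := hΩD h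
      rw [mem_unitDisk, norm_one] at this
      exact lt_irrefl 1 this
  -- the cutoff functions
  set Fc : ℕ → ℂ → ℝ := fun n z => max (1 - (n:ℝ) * Metric.infDist z Kc) 0 with hFcdef
  have hFcont : ∀ n, Continuous (Fc n) := fun n =>
    (continuous_const.sub (continuous_const.mul (Metric.continuous_infDist_pt Kc))).max
      continuous_const
  have hFnn : ∀ n z, 0 ≤ Fc n z := fun n z => le_max_right _ _
  have hFle1 : ∀ n z, Fc n z ≤ 1 := by
    intro n z
    apply max_le _ zero_le_one
    have := mul_nonneg (Nat.cast_nonneg (α := ℝ) n) (Metric.infDist_nonneg (x := z) (s := Kc))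
    linarith
  have htrans : ∀ n, ∫ z in unitDisk, Fc n (φ z) * besovIntegrand p φ z ∂dA
      = ∫ z in unitDisk, Fc n z * wgt p z ∂dA :=
    fun n => transfer hp1 ⟨hφd, hφm⟩ hiso (hFcont n)
  -- dominated convergence
  have htend : Filter.Tendsto (fun n => ∫ z in unitDisk, Fc n (φ z) * besovIntegrand p φ z ∂dA)
      Filter.atTop (nhds 0) := by
    have h0 : (0:ℝ) = ∫ (_ : ℂ) in unitDisk, (0:ℝ) ∂dA := by simp
    rw [h0]
    refine tendsto_integral_of_dominated_convergence (besovIntegrand p φ) ?_ hmInt ?_ ?_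
    · intro n
      exact (((hFcont n).comp_continuousOn hφd.continuousOn).mul
        (continuousOn_bIphi hp1 ⟨hφd, hφm⟩)).aestronglyMeasurable measurableSet_unitDisk
    · intro n
      rw [ae_restrict_iff' measurableSet_unitDisk]
      refine Filter.Eventually.of_forall fun z hz => ?_
      have hm0 : 0 ≤ besovIntegrand p φ z := besovIntegrand_nonneg hz
      rw [Real.norm_eq_abs, abs_mul, abs_of_nonneg (hFnn n _), abs_of_nonneg hm0]
      calc Fc n (φ z) * besovIntegrand p φ z ≤ 1 * besovIntegrand p φ z :=
            mul_le_mul_of_nonneg_right (hFle1 n _) hm0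
        _ = besovIntegrand p φ z := one_mul _
    · rw [ae_restrict_iff' measurableSet_unitDisk]
      refine Filter.Eventually.of_forall fun z hz => ?_
      have hφzΩ : φ z ∈ Ω := Set.mem_image_of_mem φ hz
      have hnot : φ z ∉ Kc := fun h => h.2 hφzΩ
      have hd : 0 < Metric.infDist (φ z) Kc :=
        (hKcclosed.notMem_iff_infDist_pos hKcne).1 hnot
      obtain ⟨N, hN⟩ := exists_nat_gt (1 / Metric.infDist (φ z) Kc)
      have hzero : ∀ n ≥ N, Fc n (φ z) * besovIntegrand p φ z = 0 := by
        intro n hn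
        have h1 : 1 < (N:ℝ) * Metric.infDist (φ z) Kc := (div_lt_iff₀ hd).1 hN
        have h2 : (N:ℝ) * Metric.infDist (φ z) Kc ≤ (n:ℝ) * Metric.infDist (φ z) Kc :=
          mul_le_mul_of_nonneg_right (Nat.cast_le.2 hn) hd.le
        have h3 : Fc n (φ z) = 0 := max_eq_right (by linarith)
        rw [h3, zero_mul]
      exact tendsto_atTop_of_eventually_const hzero
  -- the exceptional set
  set E : Set ℂ := unitDisk \ Ω with hEdef
  have hEmeas : MeasurableSet E := measurableSet_unitDisk.diff hΩopen.measurableSet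
  have hEKc : E ⊆ Kc := fun z hz => ⟨hDK hz.1, hz.2⟩
  have hle : ∀ n, ∫ z in E, wgt p z ∂dA ≤ ∫ z in unitDisk, Fc n z * wgt p z ∂dA := by
    intro n
    have hintn : IntegrableOn (fun z => Fc n z * wgt p z) unitDisk dA := by
      refine Integrable.mono' (integrableOn_wgt hp1) ?_ ?_
      · exact ((hFcont n).continuousOn.mul continuousOn_wgt).aestronglyMeasurable
          measurableSet_unitDisk
      · rw [ae_restrict_iff' measurableSet_unitDisk]
        refine Filter.Eventually.of_forall fun z hz => ?_
        rw [Real.norm_eq_abs, abs_mul, abs_of_nonneg (hFnn n _),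
          abs_of_nonneg (wgt_pos hz).le]
        calc Fc n z * wgt p z ≤ 1 * wgt p z :=
              mul_le_mul_of_nonneg_right (hFle1 n _) (wgt_pos hz).le
          _ = wgt p z := one_mul _
    have h1 : ∫ z in E, wgt p z ∂dA = ∫ z in E, Fc n z * wgt p z ∂dA := by
      refine setIntegral_congr_fun hEmeas fun z hz => ?_
      have h2 : Metric.infDist z Kc = 0 := Metric.infDist_zero_of_mem (hEKc hz)
      simp [hFcdef, h2]
    rw [h1]
    refine setIntegral_mono_set hintn ?_ ?_
    · have h : ∀ᵐ z ∂(dA.restrict unitDisk), 0 ≤ Fc n z * wgt p z := by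
        rw [ae_restrict_iff' measurableSet_unitDisk]
        exact Filter.Eventually.of_forall fun z hz =>
          mul_nonneg (hFnn n z) (wgt_pos hz).le
      exact h
    · exact HasSubset.Subset.eventuallyLE Set.diff_subset
  have hE0 : ∫ z in E, wgt p z ∂dA = 0 := by
    have htend2 : Filter.Tendsto (fun n => ∫ z in unitDisk, Fc n z * wgt p z ∂dA)
        Filter.atTop (nhds 0) := htend.congr fun n => htrans n
    have hle0 : ∫ z in E, wgt p z ∂dA ≤ 0 :=
      ge_of_tendsto htend2 (Filter.Eventually.of_forall hle)
    have hge0 : 0 ≤ ∫ z in E, wgt p z ∂dA :=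
      setIntegral_nonneg hEmeas fun z hz => (wgt_pos hz.1).le
    linarith
  have hwE : IntegrableOn (wgt p) E dA := (integrableOn_wgt hp1).mono_set Set.diff_subset
  have hnnE : 0 ≤ᵐ[dA.restrict E] wgt p := by
    have h : ∀ᵐ z ∂(dA.restrict E), 0 ≤ wgt p z := by
      rw [ae_restrict_iff' hEmeas]
      exact Filter.Eventually.of_forall fun z hz => (wgt_pos hz.1).le
    exact h
  have hae := (integral_eq_zero_iff_of_nonneg_ae hnnE hwE).1 hE0
  rw [Filter.EventuallyEq, ae_restrict_iff' hEmeas] at hae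
  have hnm : ∀ᵐ z ∂dA, z ∉ E := by
    refine hae.mono fun z hz hzE => ?_
    have h1 : wgt p z = 0 := hz hzE
    exact (wgt_pos hzE.1).ne' h1
  have hdAE : dA E = 0 := measure_eq_zero_iff_ae_notMem.2 hnm
  have h2 : (ENNReal.ofReal Real.pi)⁻¹ * volume E = 0 := by
    rwa [dA, Measure.smul_apply, smul_eq_mul] at hdAE
  rcases mul_eq_zero.1 h2 with h3 | h3
  · exact absurd h3 (ENNReal.inv_ne_zero.2 ENNReal.ofReal_ne_top)
  · exact h3

end IsoFull


/-- If C_φ is an isometry on B_p (1<p<∞, p≠2), then φ is a full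
map of the disk: A[𝔻 \ φ(𝔻)] = 0. -/
theorem isometry_full_map
    (p : ℝ) (hp1 : 1 < p) (hp2 : p ≠ 2) (φ : ℂ → ℂ)
    (hφ : IsAnalyticSelfMap φ) (hiso : IsBesovIsometry p φ) :
    volume (unitDisk \ (φ '' unitDisk)) = 0 :=
  IsoFull.main hp1 φ hφ hiso
end

section
/- Let p>2 and suppose the composition operator C_φ induced by an analytic self-map φ of the unit disk is an isometry on the analytic Besov space B_p. If the range of C_φ contains a univalent function (i.e., there exists f ∈ B_p such that f∘φ is injective on 𝔻), then φ is a rotation of the disk, i.e., φ(z) = λz for some λ ∈ ℂ with |λ| = 1. -/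
open MeasureTheory

set_option maxHeartbeats 2000000
section Aux
open Complex Metric Set Function Filter
open scoped Topology
noncomputable def moeb (a z : ℂ) : ℂ := (a + z) / (1 + (starRingEnd ℂ) a * z)

lemma normSq_lt_one' {a : ℂ} (ha : ‖a‖ < 1) : normSq a < 1 := by
  rw [normSq_eq_norm_sq]; nlinarith [norm_nonneg a]

lemma moeb_normSq_key (a z : ℂ) :
    normSq (1 + (starRingEnd ℂ) a * z) - normSq (a + z) = (1 - normSq a) * (1 - normSq z) := by
  simp [normSq_apply, mul_re, mul_im, conj_re, conj_im]
  ring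

lemma moeb_denom_ne {a z : ℂ} (ha : ‖a‖ < 1) (hz : ‖z‖ < 1) :
    (1 + (starRingEnd ℂ) a * z) ≠ 0 := by
  refine normSq_pos.mp ?_
  nlinarith [moeb_normSq_key a z, normSq_nonneg (a + z), normSq_lt_one' ha, normSq_lt_one' hz]

lemma moeb_mapsTo {a : ℂ} (ha : ‖a‖ < 1) :
    MapsTo (moeb a) (ball (0:ℂ) 1) (ball (0:ℂ) 1) := by
  intro z hz
  rw [mem_ball_zero_iff] at hz ⊢
  rw [moeb, norm_div, div_lt_one (norm_pos_iff.mpr (moeb_denom_ne ha hz))]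
  have key := moeb_normSq_key a z
  have h1 := normSq_lt_one' ha
  have h2 := normSq_lt_one' hz
  have h3 : normSq (a + z) < normSq (1 + (starRingEnd ℂ) a * z) := by nlinarith
  rw [normSq_eq_norm_sq, normSq_eq_norm_sq] at h3
  nlinarith [norm_nonneg (a + z), norm_nonneg (1 + (starRingEnd ℂ) a * z)]

lemma moeb_hasDerivAt {a z : ℂ} (hne : (1 + (starRingEnd ℂ) a * z) ≠ 0) :
    HasDerivAt (moeb a) ((1 - a * (starRingEnd ℂ) a) / (1 + (starRingEnd ℂ) a * z) ^ 2) z := by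
  have h1 : HasDerivAt (fun w => a + w) 1 z := (hasDerivAt_id z).const_add a
  have h2 : HasDerivAt (fun w => 1 + (starRingEnd ℂ) a * w) ((starRingEnd ℂ) a) z := by
    simpa using ((hasDerivAt_id z).const_mul ((starRingEnd ℂ) a)).const_add 1
  have := h1.div h2 hne
  rw [show moeb a = (fun w => a + w) / fun w => 1 + (starRingEnd ℂ) a * w from rfl]
  exact this.congr_deriv (by ring)

lemma moeb_zero (a : ℂ) : moeb a 0 = a := by simp [moeb]

lemma moeb_neg_self {b : ℂ} : moeb (-b) b = 0 := by simp [moeb]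

lemma schwarz_pick {φ : ℂ → ℂ} (hd : DifferentiableOn ℂ φ (ball 0 1))
    (hm : MapsTo φ (ball (0:ℂ) 1) (ball (0:ℂ) 1)) {a : ℂ} (ha : a ∈ ball (0:ℂ) 1) :
    ‖deriv φ a‖ * (1 - ‖a‖ ^ 2) ≤ 1 - ‖φ a‖ ^ 2 := by
  rw [mem_ball_zero_iff] at ha
  set b := φ a with hb
  have hbmem : ‖b‖ < 1 := mem_ball_zero_iff.mp (hm (mem_ball_zero_iff.mpr ha))
  have hbm' : ‖-b‖ < 1 := by rwa [norm_neg]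
  -- the composed map
  set ψ : ℂ → ℂ := fun z => moeb (-b) (φ (moeb a z)) with hψ
  have hmoebd : ∀ {c : ℂ}, ‖c‖ < 1 → DifferentiableOn ℂ (moeb c) (ball (0:ℂ) 1) := by
    intro c hc z hz
    exact ((moeb_hasDerivAt (moeb_denom_ne hc (mem_ball_zero_iff.mp hz))).differentiableAt).differentiableWithinAt
  have hψd : DifferentiableOn ℂ ψ (ball 0 1) :=
    ((hmoebd hbm').comp (hd.comp (hmoebd ha) (moeb_mapsTo ha))
      (hm.comp (moeb_mapsTo ha)))
  have hψm : MapsTo ψ (ball (0:ℂ) 1) (ball (0:ℂ) 1) :=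
    (moeb_mapsTo hbm').comp (hm.comp (moeb_mapsTo ha))
  have hψ0 : ψ 0 = 0 := by
    simp only [hψ, moeb_zero, ← hb, moeb_neg_self]
  -- derivative of ψ at 0
  have h1 : HasDerivAt (moeb a) (1 - a * (starRingEnd ℂ) a) 0 := by
    have := moeb_hasDerivAt (a := a) (z := 0) (by simpa using moeb_denom_ne ha (by norm_num : ‖(0:ℂ)‖ < 1))
    simpa using this
  have h2 : HasDerivAt φ (deriv φ a) a :=
    (hd.differentiableAt (isOpen_ball.mem_nhds (mem_ball_zero_iff.mpr ha))).hasDerivAt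
  have h3 : HasDerivAt (moeb (-b)) ((1 - (-b) * (starRingEnd ℂ) (-b)) / (1 + (starRingEnd ℂ) (-b) * b) ^ 2) b :=
    moeb_hasDerivAt (moeb_denom_ne hbm' hbmem)
  have hda : HasDerivAt ψ
      (((1 - (-b) * (starRingEnd ℂ) (-b)) / (1 + (starRingEnd ℂ) (-b) * b) ^ 2) *
        (deriv φ a * (1 - a * (starRingEnd ℂ) a))) 0 := by
    have h2' : HasDerivAt φ (deriv φ a) (moeb a 0) := by rwa [moeb_zero]
    have hcomp1 : HasDerivAt (fun z => φ (moeb a z)) (deriv φ a * (1 - a * (starRingEnd ℂ) a)) 0 :=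
      h2'.comp 0 h1
    have h3' : HasDerivAt (moeb (-b))
        ((1 - (-b) * (starRingEnd ℂ) (-b)) / (1 + (starRingEnd ℂ) (-b) * b) ^ 2)
        ((fun z => φ (moeb a z)) 0) := by
      simpa [moeb_zero] using h3
    exact h3'.comp 0 hcomp1
  have hsch := Complex.norm_deriv_le_one_of_mapsTo_ball hψd (hψm.mono_right (by rw [hψ0]; exact ball_subset_closedBall)) one_pos
  rw [hda.deriv] at hsch
  -- compute the absolute value
  have e1 : (1 : ℂ) - a * (starRingEnd ℂ) a = ((1 - normSq a : ℝ) : ℂ) := by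
    rw [mul_conj]; push_cast; ring
  have e2 : (1 : ℂ) - (-b) * (starRingEnd ℂ) (-b) = ((1 - normSq b : ℝ) : ℂ) := by
    rw [map_neg, neg_mul_neg, mul_conj]; push_cast; ring
  have e3 : (1 : ℂ) + (starRingEnd ℂ) (-b) * b = ((1 - normSq b : ℝ) : ℂ) := by
    rw [map_neg, neg_mul]
    rw [mul_comm ((starRingEnd ℂ) b) b, mul_conj]; push_cast; ring
  have hr : (0:ℝ) < 1 - normSq b := by nlinarith [normSq_lt_one' hbmem]
  have hs : (0:ℝ) < 1 - normSq a := by nlinarith [normSq_lt_one' ha]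
  rw [e1, e2, e3] at hsch
  have key : (1 - normSq b) * (((1 - normSq b)^2)⁻¹ * (‖deriv φ a‖ * (1 - normSq a))) ≤ 1 := by
    have := hsch
    rw [div_eq_mul_inv, ← ofReal_pow] at this
    simp only [norm_mul, norm_inv, norm_real, Real.norm_eq_abs, mul_assoc] at this
    rwa [abs_of_pos hr, abs_of_pos hs, abs_of_pos (pow_pos hr 2)] at this
  have hXle : ‖deriv φ a‖ * (1 - normSq a) ≤ 1 - normSq b := by
    have hrr : (1 - normSq b) * (((1 - normSq b)^2)⁻¹ * (‖deriv φ a‖ * (1 - normSq a)))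
        = (1 - normSq b)⁻¹ * (‖deriv φ a‖ * (1 - normSq a)) := by
      field_simp
    rw [hrr, inv_mul_le_iff₀ hr] at key
    simpa using key
  have g1 : (1:ℝ) - ‖a‖^2 = 1 - normSq a := by rw [normSq_eq_norm_sq]
  have g2 : (1:ℝ) - ‖φ a‖^2 = 1 - normSq b := by rw [normSq_eq_norm_sq]
  rw [g1, g2]
  exact hXle


lemma clm_det (c : ℂ) :
    (((1 : ℂ →L[ℂ] ℂ).smulRight c).restrictScalars ℝ).det = ‖c‖ ^ 2 := by
  have h : ((((1 : ℂ →L[ℂ] ℂ).smulRight c).restrictScalars ℝ) : ℂ →ₗ[ℝ] ℂ)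
      = Algebra.lmul ℝ ℂ c := by
    ext x
    simp [mul_comm]
  rw [ContinuousLinearMap.det, h]
  have := Algebra.norm_complex_apply c
  rw [Algebra.norm_apply] at this
  rw [this, normSq_eq_norm_sq]

lemma cov (φ : ℂ → ℂ) (hd : DifferentiableOn ℂ φ (ball 0 1)) (hinj : InjOn φ (ball (0:ℂ) 1))
    (g : ℂ → ℝ) :
    ∫ w in φ '' (ball (0:ℂ) 1), g w = ∫ z in ball (0:ℂ) 1, ‖deriv φ z‖ ^ 2 * g (φ z) := by
  have hfd : ∀ z ∈ ball (0:ℂ) 1, HasFDerivWithinAt φ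
      (((1 : ℂ →L[ℂ] ℂ).smulRight (deriv φ z)).restrictScalars ℝ) (ball (0:ℂ) 1) z := by
    intro z hz
    exact (((hd.differentiableAt (isOpen_ball.mem_nhds hz)).hasDerivAt).hasFDerivAt.restrictScalars
      ℝ).hasFDerivWithinAt
  rw [integral_image_eq_integral_abs_det_fderiv_smul volume measurableSet_ball hfd hinj g]
  congr 1
  ext z
  rw [clm_det, smul_eq_mul, _root_.abs_of_nonneg (by positivity)]


lemma int_w {p : ℝ} (hp : 2 < p) :
    IntegrableOn (fun z : ℂ => (1 - ‖z‖ ^ 2) ^ (p - 2)) (ball (0:ℂ) 1) volume := by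
  refine Measure.integrableOn_of_bounded (M := 1) (measure_ball_lt_top).ne ?_ ?_
  · exact ((Real.continuous_rpow_const (by linarith)).comp
      ((continuous_const.sub (continuous_norm.pow 2)))).aestronglyMeasurable
  · rw [ae_restrict_iff' measurableSet_ball]
    refine ae_of_all _ fun z hz => ?_
    rw [mem_ball_zero_iff] at hz
    have h0 : (0:ℝ) ≤ 1 - ‖z‖ ^ 2 := by nlinarith [norm_nonneg z]
    have h1 : (1:ℝ) - ‖z‖ ^ 2 ≤ 1 := by nlinarith [norm_nonneg z]
    rw [Real.norm_eq_abs, _root_.abs_of_nonneg (Real.rpow_nonneg h0 _)]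
    exact Real.rpow_le_one h0 h1 (by linarith)

lemma cov_integrableOn (φ : ℂ → ℂ) (hd : DifferentiableOn ℂ φ (ball 0 1))
    (hinj : InjOn φ (ball (0:ℂ) 1)) (g : ℂ → ℝ)
    (h : IntegrableOn g (φ '' ball (0:ℂ) 1) volume) :
    IntegrableOn (fun z => ‖deriv φ z‖ ^ 2 * g (φ z)) (ball (0:ℂ) 1) volume := by
  have hfd : ∀ z ∈ ball (0:ℂ) 1, HasFDerivWithinAt φ
      (((1 : ℂ →L[ℂ] ℂ).smulRight (deriv φ z)).restrictScalars ℝ) (ball (0:ℂ) 1) z := by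
    intro z hz
    exact (((hd.differentiableAt (isOpen_ball.mem_nhds hz)).hasDerivAt).hasFDerivAt.restrictScalars
      ℝ).hasFDerivWithinAt
  have h2 := (integrableOn_image_iff_integrableOn_abs_det_fderiv_smul volume measurableSet_ball
    hfd hinj g).mp h
  have hfun : (fun x => |((((1 : ℂ →L[ℂ] ℂ).smulRight (deriv φ x)).restrictScalars ℝ)).det|
      • g (φ x)) = fun z => ‖deriv φ z‖ ^ 2 * g (φ z) := by
    funext z
    rw [clm_det, smul_eq_mul, _root_.abs_of_nonneg (by positivity)]
  rwa [hfun] at h2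

lemma ptwise {p : ℝ} (hp : 2 < p) {φ : ℂ → ℂ} (hd : DifferentiableOn ℂ φ (ball 0 1))
    (hm : MapsTo φ (ball (0:ℂ) 1) (ball (0:ℂ) 1)) {z : ℂ} (hz : z ∈ ball (0:ℂ) 1) :
    ‖deriv φ z‖ ^ p * (1 - ‖z‖ ^ 2) ^ (p - 2)
      ≤ ‖deriv φ z‖ ^ 2 * (1 - ‖φ z‖ ^ 2) ^ (p - 2) := by
  have hz' : ‖z‖ < 1 := mem_ball_zero_iff.mp hz
  have hφz : ‖φ z‖ < 1 := mem_ball_zero_iff.mp (hm hz)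
  have ht : (0:ℝ) ≤ 1 - ‖z‖ ^ 2 := by nlinarith [norm_nonneg z]
  have hs : (0:ℝ) ≤ 1 - ‖φ z‖ ^ 2 := by nlinarith [norm_nonneg (φ z)]
  rcases eq_or_lt_of_le (norm_nonneg (deriv φ z)) with hx0 | hx
  · rw [← hx0, Real.zero_rpow (by positivity)]
    have : (0:ℝ) ^ 2 = 0 := by norm_num
    rw [zero_mul, this, zero_mul]
  · set x := ‖deriv φ z‖
    have hxp : x ^ p = x ^ (p - 2) * x ^ (2:ℕ) := by
      rw [← Real.rpow_natCast x 2, ← Real.rpow_add hx]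
      norm_num
    rw [hxp]
    have hsp := schwarz_pick hd hm hz
    calc x ^ (p-2) * x ^ (2:ℕ) * (1 - ‖z‖^2) ^ (p-2)
        = (x * (1 - ‖z‖^2)) ^ (p-2) * x ^ (2:ℕ) := by
          rw [Real.mul_rpow hx.le ht]; ring
      _ ≤ (1 - ‖φ z‖^2) ^ (p-2) * x ^ (2:ℕ) := by
          apply mul_le_mul_of_nonneg_right _ (by positivity)
          exact Real.rpow_le_rpow (by positivity) hsp (by linarith)
      _ = x ^ (2:ℕ) * (1 - ‖φ z‖^2) ^ (p-2) := by ring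

/-- For p>2, if C_φ is an isometry on B_p whose range contains a
univalent function, then φ is a rotation of the disk. -/
theorem isometry_range_univalent_rotation
    (p : ℝ) (hp : 2 < p) (φ : ℂ → ℂ)
    (hφ : IsAnalyticSelfMap φ) (hiso : IsBesovIsometry p φ)
    (huniv : ∃ f : ℂ → ℂ, MemBesov p f ∧ Set.InjOn (f ∘ φ) unitDisk) :
    IsRotation φ := by
  obtain ⟨hφd, hφm⟩ := hφ
  obtain ⟨f, hfB, hfinj⟩ := huniv
  have hφd' : DifferentiableOn ℂ φ (ball (0:ℂ) 1) := hφd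
  have hφm' : MapsTo φ (ball (0:ℂ) 1) (ball (0:ℂ) 1) := hφm
  have hφinj : InjOn φ (ball (0:ℂ) 1) := fun x hx y hy hxy =>
    hfinj hx hy (by simp only [Function.comp_apply, hxy])
  have hp0 : (0:ℝ) < p := by linarith
  have hp2 : (0:ℝ) < p - 2 := by linarith
  -- besov integrand of id
  have hidint : besovIntegrand p id = fun z : ℂ => (1 - ‖z‖ ^ 2) ^ (p - 2) := by
    funext z; simp [besovIntegrand, Real.one_rpow]
  -- dA ↔ volume conversions
  have hdAne : ((ENNReal.ofReal Real.pi)⁻¹ : ENNReal) ≠ 0 :=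
    ENNReal.inv_ne_zero.mpr ENNReal.ofReal_ne_top
  have hdAnetop : ((ENNReal.ofReal Real.pi)⁻¹ : ENNReal) ≠ ⊤ := by
    rw [ENNReal.inv_ne_top]
    simp [Real.pi_pos]
  have hconv : ∀ (g : ℂ → ℝ) (s : Set ℂ), IntegrableOn g s dA ↔ IntegrableOn g s volume := by
    intro g s
    unfold IntegrableOn
    rw [dA, Measure.restrict_smul]
    exact integrable_smul_measure hdAne hdAnetop
  have hintc : ∀ (g : ℂ → ℝ) (s : Set ℂ),
      ∫ z in s, g z ∂dA = (Real.pi)⁻¹ * ∫ z in s, g z ∂volume := by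
    intro g s
    rw [dA, Measure.restrict_smul, integral_smul_measure, smul_eq_mul,
      ENNReal.toReal_inv, ENNReal.toReal_ofReal Real.pi_pos.le]
  have hwInt : IntegrableOn (fun z : ℂ => (1 - ‖z‖ ^ 2) ^ (p - 2)) (ball (0:ℂ) 1) volume :=
    int_w hp
  -- id and z + c belong to B_p
  have hidB : MemBesov p id := by
    refine ⟨differentiableOn_id, ?_⟩
    rw [hidint]
    exact (hconv _ _).mpr hwInt
  set c := -(φ 0) with hc
  have hgB : MemBesov p (fun z => z + c) := by
    refine ⟨(differentiable_id.add_const c).differentiableOn, ?_⟩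
    have h1 : besovIntegrand p (fun z => z + c) = besovIntegrand p id := by
      funext z
      simp [besovIntegrand, deriv_add_const]
    rw [h1, hidint]
    exact (hconv _ _).mpr hwInt
  obtain ⟨hφB, heq1⟩ := hiso id hidB
  rw [Function.id_comp] at hφB heq1
  obtain ⟨-, heq2⟩ := hiso _ hgB
  -- the integrand of the shifted composition
  have hshift : besovIntegrand p ((fun z => z + c) ∘ φ) = besovIntegrand p φ := by
    funext z
    show ‖deriv (fun w => φ w + c) z‖ ^ p * _ = _
    rw [deriv_add_const]
    rfl
  have hsemig : besovSemi p ((fun z => z + c) ∘ φ) = besovSemi p φ := by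
    unfold besovSemi
    rw [hshift]
  -- extract φ 0 = 0 and equality of seminorms
  have heq1' : ‖φ 0‖ + besovSemi p φ = besovSemi p id := by
    have := heq1
    unfold besovNorm at this
    simpa using this
  have hsemiid : besovSemi p (fun z => z + c) = besovSemi p id := by
    unfold besovSemi
    rw [show besovIntegrand p (fun z => z + c) = besovIntegrand p id from
      funext fun z => by simp [besovIntegrand, deriv_add_const]]
  have heq2' : besovSemi p φ = ‖φ 0‖ + besovSemi p id := by
    have := heq2
    unfold besovNorm at this
    rw [hsemig, hsemiid] at this
    have h0 : ((fun z => z + c) ∘ φ) 0 = 0 := by simp [hc]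
    rw [h0] at this
    simpa [hc] using this
  have hφ0 : φ 0 = 0 := by
    rw [← norm_eq_zero]
    linarith
  have hST : besovSemi p φ = besovSemi p id := by
    rw [hφ0, norm_zero] at heq1'
    linarith
  -- from seminorm equality to integral equality (w.r.t. dA)
  have hunitb : unitDisk = ball (0:ℂ) 1 := rfl
  have hIu_nonneg : 0 ≤ ∫ z in unitDisk, besovIntegrand p φ z ∂dA := by
    refine setIntegral_nonneg measurableSet_ball fun z hz => ?_
    have hz' : ‖z‖ < 1 := mem_ball_zero_iff.mp hz
    have : (0:ℝ) ≤ 1 - ‖z‖ ^ 2 := by nlinarith [norm_nonneg z]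
    exact mul_nonneg (Real.rpow_nonneg (norm_nonneg _) _) (Real.rpow_nonneg this _)
  have hIw_nonneg : 0 ≤ ∫ z in unitDisk, besovIntegrand p id z ∂dA := by
    refine setIntegral_nonneg measurableSet_ball fun z hz => ?_
    have hz' : ‖z‖ < 1 := mem_ball_zero_iff.mp hz
    have h1 : (0:ℝ) ≤ 1 - ‖z‖ ^ 2 := by nlinarith [norm_nonneg z]
    rw [hidint]
    exact Real.rpow_nonneg h1 _
  have hIdA : ∫ z in unitDisk, besovIntegrand p φ z ∂dA
      = ∫ z in unitDisk, besovIntegrand p id z ∂dA := by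
    have e : ∀ x : ℝ, 0 ≤ x → (x ^ (1/p)) ^ p = x := by
      intro x hx
      rw [← Real.rpow_mul hx, one_div_mul_cancel (ne_of_gt hp0), Real.rpow_one]
    calc ∫ z in unitDisk, besovIntegrand p φ z ∂dA
        = ((∫ z in unitDisk, besovIntegrand p φ z ∂dA) ^ (1/p)) ^ p := (e _ hIu_nonneg).symm
      _ = ((∫ z in unitDisk, besovIntegrand p id z ∂dA) ^ (1/p)) ^ p := by
          rw [show ((∫ z in unitDisk, besovIntegrand p φ z ∂dA) ^ (1/p))
            = ((∫ z in unitDisk, besovIntegrand p id z ∂dA) ^ (1/p)) from hST]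
      _ = ∫ z in unitDisk, besovIntegrand p id z ∂dA := e _ hIw_nonneg
  -- move to volume
  have hIvol : ∫ z in ball (0:ℂ) 1, besovIntegrand p φ z ∂volume
      = ∫ z in ball (0:ℂ) 1, (1 - ‖z‖ ^ 2) ^ (p - 2) ∂volume := by
    have := hIdA
    rw [hunitb, hintc, hintc, hidint] at this
    exact mul_left_cancel₀ (inv_ne_zero Real.pi_ne_zero) this
  -- integrability over volume
  have intu : IntegrableOn (besovIntegrand p φ) (ball (0:ℂ) 1) volume :=
    (hconv _ _).mp hφB.2
  set g : ℂ → ℝ := fun w => (1 - ‖w‖ ^ 2) ^ (p - 2) with hg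
  have hgsub : φ '' ball (0:ℂ) 1 ⊆ ball (0:ℂ) 1 := hφm'.image_subset
  have hgint : IntegrableOn g (φ '' ball (0:ℂ) 1) volume := hwInt.mono_set hgsub
  have inth : IntegrableOn (fun z => ‖deriv φ z‖ ^ 2 * g (φ z)) (ball (0:ℂ) 1) volume :=
    cov_integrableOn φ hφd' hφinj g hgint
  -- the chain of inequalities
  have hptw : ∀ z ∈ ball (0:ℂ) 1,
      besovIntegrand p φ z ≤ ‖deriv φ z‖ ^ 2 * g (φ z) := fun z hz =>
    ptwise hp hφd' hφm' hz
  have hIuh : ∫ z in ball (0:ℂ) 1, besovIntegrand p φ z ∂volume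
      ≤ ∫ z in ball (0:ℂ) 1, ‖deriv φ z‖ ^ 2 * g (φ z) ∂volume :=
    setIntegral_mono_on intu inth measurableSet_ball hptw
  have hIh_img : ∫ z in ball (0:ℂ) 1, ‖deriv φ z‖ ^ 2 * g (φ z) ∂volume
      = ∫ w in φ '' ball (0:ℂ) 1, g w ∂volume := (cov φ hφd' hφinj g).symm
  have hImg_w : ∫ w in φ '' ball (0:ℂ) 1, g w ∂volume
      ≤ ∫ w in ball (0:ℂ) 1, g w ∂volume := by
    refine setIntegral_mono_set hwInt ((ae_restrict_iff' measurableSet_ball).mpr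
      (ae_of_all _ fun z hz => ?_)) (HasSubset.Subset.eventuallyLE hgsub)
    have hz' : ‖z‖ < 1 := mem_ball_zero_iff.mp hz
    have : (0:ℝ) ≤ 1 - ‖z‖ ^ 2 := by nlinarith [norm_nonneg z]
    exact Real.rpow_nonneg this _
  have hIuIh : ∫ z in ball (0:ℂ) 1, besovIntegrand p φ z ∂volume
      = ∫ z in ball (0:ℂ) 1, ‖deriv φ z‖ ^ 2 * g (φ z) ∂volume := by
    have h1 : ∫ z in ball (0:ℂ) 1, ‖deriv φ z‖ ^ 2 * g (φ z) ∂volume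
        ≤ ∫ z in ball (0:ℂ) 1, (1 - ‖z‖ ^ 2) ^ (p - 2) ∂volume := le_of_eq_of_le hIh_img hImg_w
    linarith [hIvol]
  -- a.e. equality, then everywhere by continuity
  have hsub0 : ∫ z in ball (0:ℂ) 1,
      (‖deriv φ z‖ ^ 2 * g (φ z) - besovIntegrand p φ z) ∂volume = 0 := by
    rw [integral_sub inth intu]
    linarith
  have hnn : 0 ≤ᵐ[volume.restrict (ball (0:ℂ) 1)]
      fun z => ‖deriv φ z‖ ^ 2 * g (φ z) - besovIntegrand p φ z :=
    (ae_restrict_iff' measurableSet_ball).mpr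
      (ae_of_all _ fun z hz => sub_nonneg.mpr (hptw z hz))
  have haeeq := (integral_eq_zero_iff_of_nonneg_ae hnn (inth.sub intu)).mp hsub0
  have hae : ∀ᵐ z ∂volume, z ∈ ball (0:ℂ) 1 →
      ‖deriv φ z‖ ^ 2 * g (φ z) - besovIntegrand p φ z = 0 :=
    (ae_restrict_iff' measurableSet_ball).mp haeeq
  -- continuity of the difference on the ball
  have hdc : ContinuousOn (deriv φ) (ball (0:ℂ) 1) :=
    ((hφd'.analyticOnNhd isOpen_ball).deriv).continuousOn
  have hφc : ContinuousOn φ (ball (0:ℂ) 1) := hφd'.continuousOn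
  have hwc : Continuous (fun z : ℂ => (1 - ‖z‖ ^ 2) ^ (p - 2)) :=
    (Real.continuous_rpow_const (by linarith)).comp (continuous_const.sub (continuous_norm.pow 2))
  have hu_cont : ContinuousOn (besovIntegrand p φ) (ball (0:ℂ) 1) := by
    have h1 : ContinuousOn (fun z => ‖deriv φ z‖ ^ p) (ball (0:ℂ) 1) :=
      hdc.norm.rpow_const fun z _ => Or.inr hp0.le
    exact h1.mul hwc.continuousOn
  have hh_cont : ContinuousOn (fun z => ‖deriv φ z‖ ^ 2 * g (φ z)) (ball (0:ℂ) 1) :=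
    (hdc.norm.pow 2).mul (hwc.comp_continuousOn hφc)
  have hD : ∀ z ∈ ball (0:ℂ) 1, ‖deriv φ z‖ ^ 2 * g (φ z) = besovIntegrand p φ z := by
    intro z hz
    by_contra hne
    have hopen : IsOpen (ball (0:ℂ) 1 ∩
        (fun z => ‖deriv φ z‖ ^ 2 * g (φ z) - besovIntegrand p φ z) ⁻¹' ({0}ᶜ)) :=
      (hh_cont.sub hu_cont).isOpen_inter_preimage isOpen_ball isOpen_compl_singleton
    have hnull : volume (ball (0:ℂ) 1 ∩
        (fun z => ‖deriv φ z‖ ^ 2 * g (φ z) - besovIntegrand p φ z) ⁻¹' ({0}ᶜ)) = 0 := by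
      refine measure_mono_null ?_ (ae_iff.mp hae)
      intro w hw hcontra
      exact hw.2 (hcontra hw.1)
    have hempty := (hopen.measure_eq_zero_iff volume).mp hnull
    have hzmem : z ∈ ball (0:ℂ) 1 ∩
        (fun z => ‖deriv φ z‖ ^ 2 * g (φ z) - besovIntegrand p φ z) ⁻¹' ({0}ᶜ) :=
      ⟨hz, fun h0 => hne (by linarith [sub_eq_zero.mp h0])⟩
    rw [hempty] at hzmem
    exact hzmem
  -- Schwarz–Pick equality wherever deriv φ ≠ 0
  have hPQ : ∀ z ∈ ball (0:ℂ) 1, deriv φ z ≠ 0 →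
      ‖deriv φ z‖ * (1 - ‖z‖ ^ 2) = 1 - ‖φ z‖ ^ 2 := by
    intro z hz hdz
    have hx : 0 < ‖deriv φ z‖ := norm_pos_iff.mpr hdz
    set x := ‖deriv φ z‖
    have hz' : ‖z‖ < 1 := mem_ball_zero_iff.mp hz
    have hφz : ‖φ z‖ < 1 := mem_ball_zero_iff.mp (hφm' hz)
    have ht : (0:ℝ) ≤ 1 - ‖z‖ ^ 2 := by nlinarith [norm_nonneg z]
    have hs : (0:ℝ) ≤ 1 - ‖φ z‖ ^ 2 := by nlinarith [norm_nonneg (φ z)]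
    have heq := hD z hz
    unfold besovIntegrand at heq
    have hxp : x ^ p = x ^ (p - 2) * x ^ (2:ℕ) := by
      rw [← Real.rpow_natCast x 2, ← Real.rpow_add hx]
      norm_num
    rw [hxp] at heq
    have heq2 : x ^ (2:ℕ) * (1 - ‖φ z‖ ^ 2) ^ (p - 2)
        = x ^ (2:ℕ) * (x * (1 - ‖z‖ ^ 2)) ^ (p - 2) := by
      rw [Real.mul_rpow hx.le ht]
      simp only [hg] at heq
      linear_combination heq
    have hcancel : (1 - ‖φ z‖ ^ 2) ^ (p - 2) = (x * (1 - ‖z‖ ^ 2)) ^ (p - 2) :=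
      mul_left_cancel₀ (pow_ne_zero 2 (ne_of_gt hx)) heq2
    have einj : ∀ a b : ℝ, 0 ≤ a → 0 ≤ b → a ^ (p - 2) = b ^ (p - 2) → a = b := by
      intro a b ha hb hab
      have ea : a = (a ^ (p - 2)) ^ ((p - 2)⁻¹) := by
        rw [← Real.rpow_mul ha, mul_inv_cancel₀ (ne_of_gt hp2), Real.rpow_one]
      rw [ea, hab, ← Real.rpow_mul hb, mul_inv_cancel₀ (ne_of_gt hp2), Real.rpow_one]
    exact (einj _ _ hs (mul_nonneg hx.le ht) hcancel).symm
  -- the endgame: |deriv φ 0| = 1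
  have hnorm1 : ‖deriv φ 0‖ = 1 := by
    have han : AnalyticAt ℂ (deriv φ) 0 :=
      ((hφd'.analyticOnNhd isOpen_ball).deriv) 0 (mem_ball_self one_pos)
    rcases han.eventually_eq_zero_or_eventually_ne_zero with hcase | hcase
    · -- deriv φ ≡ 0 near 0 : contradiction with injectivity
      exfalso
      rw [Metric.eventually_nhds_iff] at hcase
      obtain ⟨ε, hε, hball⟩ := hcase
      set r := min ε 1 with hrdef
      have hr : 0 < r := lt_min hε one_pos
      have hrsub : ball (0:ℂ) r ⊆ ball (0:ℂ) 1 := ball_subset_ball (min_le_right _ _)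
      have hder0 : ∀ z ∈ ball (0:ℂ) r, fderivWithin ℂ φ (ball (0:ℂ) r) z = 0 := by
        intro z hz
        have hz1 : z ∈ ball (0:ℂ) 1 := hrsub hz
        have hdz : deriv φ z = 0 := by
          apply hball
          have := mem_ball_iff_norm.mp hz
          rw [dist_eq_norm]
          simp only [sub_zero] at this ⊢
          exact lt_of_lt_of_le this (min_le_left _ _)
        have hder := (hφd'.differentiableAt (isOpen_ball.mem_nhds hz1)).hasDerivAt
        rw [hdz] at hder
        rw [fderivWithin_of_isOpen isOpen_ball hz, hder.hasFDerivAt.fderiv]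
        ext w
        simp
      have hconst := (convex_ball (0:ℂ) r).is_const_of_fderivWithin_eq_zero
        (hφd'.mono hrsub) hder0 (mem_ball_self hr)
        (show ((r/2 : ℝ) : ℂ) ∈ ball (0:ℂ) r by
          rw [mem_ball_zero_iff, Complex.norm_real, Real.norm_eq_abs, abs_of_pos (by linarith)]
          linarith)
      have hne : ((r/2 : ℝ) : ℂ) ≠ 0 := by
        simp only [ne_eq, Complex.ofReal_eq_zero]
        linarith
      have := hφinj (mem_ball_self one_pos)
        (hrsub (show ((r/2 : ℝ) : ℂ) ∈ ball (0:ℂ) r by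
          rw [mem_ball_zero_iff, Complex.norm_real, Real.norm_eq_abs, abs_of_pos (by linarith)]
          linarith)) hconst
      exact hne this.symm
    · -- take the limit along the punctured neighborhood
      have hball1 : ∀ᶠ z in 𝓝[≠] (0:ℂ), z ∈ ball (0:ℂ) 1 :=
        eventually_nhdsWithin_of_eventually_nhds
          (isOpen_ball.eventually_mem (mem_ball_self one_pos))
      have hev2 : ∀ᶠ z in 𝓝[≠] (0:ℂ),
          ‖deriv φ z‖ * (1 - ‖z‖ ^ 2) = 1 - ‖φ z‖ ^ 2 := by
        filter_upwards [hcase, hball1] with z h1 h2 using hPQ z h2 h1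
      have hPc : ContinuousAt (fun z : ℂ => ‖deriv φ z‖ * (1 - ‖z‖ ^ 2)) 0 := by
        refine ContinuousAt.mul ?_ (Continuous.continuousAt (by continuity))
        exact (hdc.continuousAt (isOpen_ball.mem_nhds (mem_ball_self one_pos))).norm
      have hQc : ContinuousAt (fun z : ℂ => 1 - ‖φ z‖ ^ 2) 0 := by
        refine ContinuousAt.sub continuousAt_const ?_
        exact ((hφc.continuousAt (isOpen_ball.mem_nhds (mem_ball_self one_pos))).norm).pow 2
      have t1 : Filter.Tendsto (fun z : ℂ => ‖deriv φ z‖ * (1 - ‖z‖ ^ 2)) (𝓝[≠] (0:ℂ))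
          (𝓝 (‖deriv φ 0‖ * (1 - ‖(0:ℂ)‖ ^ 2))) := hPc.tendsto.mono_left nhdsWithin_le_nhds
      have t2 : Filter.Tendsto (fun z : ℂ => 1 - ‖φ z‖ ^ 2) (𝓝[≠] (0:ℂ))
          (𝓝 (1 - ‖φ 0‖ ^ 2)) := hQc.tendsto.mono_left nhdsWithin_le_nhds
      have t1' : Filter.Tendsto (fun z : ℂ => 1 - ‖φ z‖ ^ 2) (𝓝[≠] (0:ℂ))
          (𝓝 (‖deriv φ 0‖ * (1 - ‖(0:ℂ)‖ ^ 2))) := Filter.Tendsto.congr' hev2 t1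
      have huniq := tendsto_nhds_unique t1' t2
      rw [hφ0] at huniq
      simpa using huniq
  -- Schwarz lemma equality case
  have hmaps0 : MapsTo φ (ball (0:ℂ) 1) (ball (φ 0) 1) := by rw [hφ0]; exact hφm'
  have heqOn := Complex.affine_of_mapsTo_ball_of_norm_dslope_eq_div hφd' (hmaps0.mono_right ball_subset_closedBall)
    (mem_ball_self one_pos) (by rw [dslope_same]; simp [hnorm1])
  refine ⟨deriv φ 0, hnorm1, fun z hz => ?_⟩
  have := heqOn hz
  simp only [dslope_same, hφ0, sub_zero, zero_add, smul_eq_mul] at this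
  rw [this, mul_comm]

end Aux
end
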